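/- arXiv:1806.05878 — 7 statements merged into one kernel-verified Lean document; each statement's English description precedes it below -/
import Mathlib

section
/- Let n ≥ 1, k = 2 (so q = 4 and ζ = i), and let f : 𝔽₂ⁿ → ℤ₄ be a generalized Boolean function. Suppose u ∈ 𝔽₂ⁿ satisfies |H_f(u)| = 2^{m/2}·ℓ for some odd integer m ≥ 1 and some odd integer ℓ ≥ 1. Then there exist integers ℓ₁, ℓ₂ with ℓ₁² + ℓ₂² = ℓ² such that H_f(u) = 2^{(m−1)/2}·((ℓ₁ + ℓ₂) + (ℓ₁ − ℓ₂)·i). (In particular, if ℓ² is not a sum of two nonzero squares this forces H_f(u) = 2^{(m−1)/2}·ℓ·(±1 ± i).) -/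
open scoped BigOperators

/-- The primitive `q`-th complex root of unity `ζ_q = e^{2πi/q}`. -/
noncomputable def zetaQ (q : ℕ) : ℂ := Complex.exp (2 * Real.pi * Complex.I / q)

/-- The generalized Walsh–Hadamard transform of `f : 𝔽₂ⁿ → ℤ_q`. -/
noncomputable def gWHT {n : ℕ} (q : ℕ) (f : (Fin n → ZMod 2) → ZMod q)
    (u : Fin n → ZMod 2) : ℂ :=
  ∑ x : Fin n → ZMod 2, zetaQ q ^ (f x).val * (-1 : ℂ) ^ (∑ i, (u i * x i).val)

/-- The Walsh–Hadamard transform of a Boolean function `g : 𝔽₂ⁿ → 𝔽₂`. -/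
noncomputable def bWHT {n : ℕ} (g : (Fin n → ZMod 2) → ZMod 2)
    (u : Fin n → ZMod 2) : ℂ :=
  ∑ x : Fin n → ZMod 2, (-1 : ℂ) ^ (g x + ∑ i, u i * x i).val

/-- The `i`-th binary digit `a_i` of a function `f : 𝔽₂ⁿ → ℤ_{2^k}`. -/
def digit {n q : ℕ} (f : (Fin n → ZMod 2) → ZMod q) (i : ℕ)
    (x : Fin n → ZMod 2) : ZMod 2 :=
  (((f x).val / 2 ^ i : ℕ) : ZMod 2)

/-- The component function `f_c = c_0 a_0 ⊕ ⋯ ⊕ c_{k-2} a_{k-2} ⊕ a_{k-1}`. -/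
def comp {n k : ℕ} (f : (Fin n → ZMod 2) → ZMod (2 ^ k)) (c : Fin (k - 1) → ZMod 2)
    (x : Fin n → ZMod 2) : ZMod 2 :=
  (∑ j : Fin (k - 1), c j * digit f (j : ℕ) x) + digit f (k - 1) x

/-- The canonical bijection `ι : 𝔽₂^m → ℤ_{2^m}`. -/
def iotaF {m : ℕ} (d : Fin m → ZMod 2) : ZMod (2 ^ m) :=
  ∑ j : Fin m, ((d j).val : ZMod (2 ^ m)) * 2 ^ (j : ℕ)

/-- The inverse `ι⁻¹ : ℤ_{2^m} → 𝔽₂^m` of the canonical bijection. -/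
def invIota {m : ℕ} (g : ZMod (2 ^ m)) : Fin m → ZMod 2 :=
  fun j => ((g.val / 2 ^ (j : ℕ) : ℕ) : ZMod 2)

lemma zetaQ_four : zetaQ 4 = Complex.I := by
  unfold zetaQ
  have : (2 * (Real.pi:ℂ) * Complex.I / ((4:ℕ):ℂ)) = (Real.pi/2 : ℝ) * Complex.I := by
    push_cast; ring
  rw [this, Complex.exp_mul_I]
  push_cast [Complex.ofReal_cos, Complex.ofReal_sin]
  norm_num [Real.cos_pi_div_two, Real.sin_pi_div_two]

lemma I_pow_gauss (v : ℕ) : ∃ A B : ℤ, Complex.I ^ v = (A:ℂ) + (B:ℂ) * Complex.I := by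
  induction v with
  | zero => exact ⟨1, 0, by simp⟩
  | succ v ih =>
    obtain ⟨A, B, h⟩ := ih
    refine ⟨-B, A, ?_⟩
    rw [pow_succ, h]
    have : ((A:ℂ) + (B:ℂ) * Complex.I) * Complex.I
        = (A:ℂ) * Complex.I + (B:ℂ) * (Complex.I * Complex.I) := by ring
    rw [this, Complex.I_mul_I]
    push_cast; ring

lemma gWHT_gauss {n : ℕ} (f : (Fin n → ZMod 2) → ZMod 4) (u : Fin n → ZMod 2) :
    ∃ A B : ℤ, gWHT 4 f u = (A:ℂ) + (B:ℂ) * Complex.I := by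
  unfold gWHT
  rw [zetaQ_four]
  induction (Finset.univ : Finset (Fin n → ZMod 2)) using Finset.cons_induction with
  | empty => exact ⟨0, 0, by simp⟩
  | cons x s hx ih =>
    obtain ⟨A, B, hAB⟩ := ih
    obtain ⟨a, b, hab⟩ := I_pow_gauss (f x).val
    rcases Nat.even_or_odd (∑ i, (u i * x i).val) with he | he
    · refine ⟨a + A, b + B, ?_⟩
      rw [Finset.sum_cons, hAB, hab, he.neg_one_pow]
      push_cast; ring
    · refine ⟨-a + A, -b + B, ?_⟩
      rw [Finset.sum_cons, hAB, hab, he.neg_one_pow]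
      push_cast; ring

lemma sq4 (A B : ℤ) (h : 4 ∣ A^2 + B^2) : 2 ∣ A ∧ 2 ∣ B := by
  obtain ⟨c, hc⟩ := h
  rcases Int.even_or_odd A with ⟨x, rfl⟩ | ⟨x, rfl⟩ <;>
    rcases Int.even_or_odd B with ⟨y, rfl⟩ | ⟨y, rfl⟩
  · exact ⟨⟨x, by ring⟩, ⟨y, by ring⟩⟩
  · exfalso
    have h2 : 4*(x^2 + y^2 + y) + 1 = 4*c := by linear_combination hc
    set s := x^2 + y^2 + y with hs
    omega
  · exfalso
    have h2 : 4*(x^2 + x + y^2) + 1 = 4*c := by linear_combination hc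
    set s := x^2 + x + y^2 with hs
    omega
  · exfalso
    have h2 : 4*(x^2 + x + y^2 + y) + 2 = 4*c := by linear_combination hc
    set s := x^2 + x + y^2 + y with hs
    omega

lemma extract : ∀ (j : ℕ) (A B c : ℤ), A^2 + B^2 = 2^(2*j+1) * c →
    ∃ a b : ℤ, A = 2^j * a ∧ B = 2^j * b ∧ a^2 + b^2 = 2*c := by
  intro j
  induction j with
  | zero => exact fun A B c h => ⟨A, B, by ring, by ring, by linear_combination h⟩
  | succ j ih =>
    intro A B c h
    have h4 : (4:ℤ) ∣ A^2 + B^2 := ⟨2^(2*j+1) * c, by rw [h]; ring⟩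
    obtain ⟨⟨a', rfl⟩, ⟨b', rfl⟩⟩ := sq4 _ _ h4
    have h' : a'^2 + b'^2 = 2^(2*j+1) * c := by
      have h2 : 4*(a'^2 + b'^2) = 4*(2^(2*j+1) * c) := by linear_combination h
      linarith
    obtain ⟨a, b, ha, hb, hab⟩ := ih a' b' c h'
    exact ⟨a, b, by rw [ha]; ring, by rw [hb]; ring, hab⟩

lemma final_split (a b c : ℤ) (h : a^2 + b^2 = 2*c) :
    ∃ l1 l2 : ℤ, a = l1 + l2 ∧ b = l1 - l2 ∧ l1^2 + l2^2 = c := by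
  have hev : Even (a + b) := by
    rcases Int.even_or_odd a with ha | ha <;> rcases Int.even_or_odd b with hb | hb
    · exact ha.add hb
    · exfalso
      have h1 : Odd (a^2 + b^2) :=
        (Int.even_pow.mpr ⟨ha, two_ne_zero⟩).add_odd (hb.pow)
      have h2 : Even (a^2 + b^2) := ⟨c, by linarith⟩
      exact ((Int.not_odd_iff_even.mpr h2) h1)
    · exfalso
      have h1 : Odd (a^2 + b^2) := by
        rw [add_comm]
        exact (Int.even_pow.mpr ⟨hb, two_ne_zero⟩).add_odd (ha.pow)
      have h2 : Even (a^2 + b^2) := ⟨c, by linarith⟩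
      exact ((Int.not_odd_iff_even.mpr h2) h1)
    · exact ha.add_odd hb
  obtain ⟨t, ht⟩ := hev
  refine ⟨t, a - t, by ring, by omega, ?_⟩
  have hb : b = t + t - a := by omega
  rw [hb] at h
  have h2 : 2*(t^2 + (a - t)^2) = 2*c := by linear_combination h
  linarith

/-- Theorem 2, case `m` odd and `k = 2`: if `|H_f(u)| = 2^{m/2}·ℓ` with
`m, ℓ` odd, then `H_f(u) = 2^{(m-1)/2}·((ℓ₁+ℓ₂) + (ℓ₁−ℓ₂)·i)` for some integers
`ℓ₁, ℓ₂` with `ℓ₁² + ℓ₂² = ℓ²`. -/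
theorem stmt1 (n : ℕ) (hn : 1 ≤ n)
    (f : (Fin n → ZMod 2) → ZMod 4) (u : Fin n → ZMod 2)
    (m ℓ : ℕ) (hm : Odd m) (hm1 : 1 ≤ m) (hℓ : Odd ℓ) (hℓ1 : 1 ≤ ℓ)
    (habs : ‖gWHT 4 f u‖ = (2 : ℝ) ^ ((m : ℝ) / 2) * ℓ) :
    ∃ l1 l2 : ℤ, l1 ^ 2 + l2 ^ 2 = (ℓ : ℤ) ^ 2 ∧
      gWHT 4 f u = (2 : ℂ) ^ ((m - 1) / 2) *
        (((l1 + l2 : ℤ) : ℂ) + ((l1 - l2 : ℤ) : ℂ) * Complex.I) := by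
  obtain ⟨A, B, hz⟩ := gWHT_gauss f u
  -- squared absolute value
  have hpow : ((2:ℝ) ^ ((m:ℝ)/2)) ^ 2 = (2:ℝ) ^ (m:ℕ) := by
    rw [← Real.rpow_natCast ((2:ℝ) ^ ((m:ℝ)/2)) 2,
        ← Real.rpow_mul (by norm_num : (0:ℝ) ≤ 2)]
    rw [show (m:ℝ)/2 * ((2:ℕ):ℝ) = ((m:ℕ):ℝ) by push_cast; ring]
    exact Real.rpow_natCast 2 m
  have h1 : (‖gWHT 4 f u‖)^2 = ((2:ℝ) ^ ((m:ℝ)/2) * ℓ)^2 := by rw [habs]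
  rw [hz, Complex.sq_norm] at h1
  have h2 : Complex.normSq ((A:ℂ) + (B:ℂ) * Complex.I) = (A:ℝ)^2 + (B:ℝ)^2 := by
    rw [show ((A:ℂ) + (B:ℂ) * Complex.I) = (((A:ℝ):ℂ) + ((B:ℝ):ℂ) * Complex.I) by push_cast; ring]
    rw [Complex.normSq_add_mul_I]
  rw [h2, mul_pow, hpow] at h1
  have hZ : A^2 + B^2 = 2^m * (ℓ:ℤ)^2 := by exact_mod_cast h1
  obtain ⟨r, hr⟩ := hm
  have hm' : m = 2*r + 1 := by omega
  rw [hm'] at hZ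
  obtain ⟨a, b, hA, hB, hab⟩ := extract r A B ((ℓ:ℤ)^2) hZ
  obtain ⟨l1, l2, ha, hb, hl⟩ := final_split a b ((ℓ:ℤ)^2) hab
  refine ⟨l1, l2, hl, ?_⟩
  have hr2 : (m - 1)/2 = r := by omega
  rw [hz, hr2, hA, hB, ha, hb]
  push_cast
  ring
end

section
/- Let n ≥ 1, k ≥ 1, q = 2^k, and let f : 𝔽₂ⁿ → ℤ_q be a generalized Boolean function. Then for every a ∈ 𝔽₂ⁿ, 2^{k−1}·H_f(a) = Σ_{(c,d) ∈ 𝔽₂^{k−1} × 𝔽₂^{k−1}} (−1)^{c·d} ζ^{ι(d)} W_{f_c}(a). -/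
open scoped BigOperators

/- ### Auxiliary lemmas -/

lemma neg_one_pow_zmod (N : ℕ) : (-1 : ℂ) ^ ((N : ZMod 2)).val = (-1 : ℂ) ^ N := by
  rw [ZMod.val_natCast]
  conv_rhs => rw [← Nat.div_add_mod N 2]
  rw [pow_add, pow_mul]
  norm_num

lemma zmod2_cast_val (z : ZMod 2) : ((z.val : ℕ) : ZMod 2) = z :=
  ZMod.natCast_rightInverse z

lemma chi_add (z w : ZMod 2) :
    (-1 : ℂ) ^ (z + w).val = (-1 : ℂ) ^ z.val * (-1 : ℂ) ^ w.val := by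
  have h : z + w = ((z.val + w.val : ℕ) : ZMod 2) := by
    rw [Nat.cast_add, zmod2_cast_val, zmod2_cast_val]
  rw [h, neg_one_pow_zmod, pow_add, ← neg_one_pow_zmod z.val, ← neg_one_pow_zmod w.val,
    zmod2_cast_val, zmod2_cast_val]

lemma chi_sum {α : Type*} (s : Finset α) (z : α → ZMod 2) :
    (-1 : ℂ) ^ (∑ i ∈ s, z i).val = ∏ i ∈ s, (-1 : ℂ) ^ (z i).val := by
  classical
  induction s using Finset.induction with
  | empty => simp
  | insert _ _ hx ih =>
    rw [Finset.sum_insert hx, Finset.prod_insert hx, chi_add, ih]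

lemma pow_nat_sum {α : Type*} (s : Finset α) (g : α → ℕ) :
    (-1 : ℂ) ^ (∑ i ∈ s, g i) = ∏ i ∈ s, (-1 : ℂ) ^ g i := by
  classical
  induction s using Finset.induction with
  | empty => simp
  | insert _ _ hx ih => rw [Finset.sum_insert hx, Finset.prod_insert hx, pow_add, ih]

lemma zmod2_cases : ∀ z : ZMod 2, z = 0 ∨ z = 1 := by decide

lemma sum_zmod2 (g : ZMod 2 → ℂ) : ∑ s : ZMod 2, g s = g 0 + g 1 := by
  show ∑ s : Fin 2, g s = _
  exact Fin.sum_univ_two g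

lemma orth (m : ℕ) (e : Fin m → ZMod 2) :
    ∑ c : Fin m → ZMod 2, ∏ i, (-1 : ℂ) ^ ((c i * e i)).val
      = if e = 0 then (2 : ℂ) ^ m else 0 := by
  classical
  rw [← Fintype.prod_sum (f := fun i (s : ZMod 2) => (-1 : ℂ) ^ ((s * e i)).val)]
  by_cases he : e = 0
  · subst he
    simp [sum_zmod2, Finset.prod_const, Finset.card_univ]
  · rw [if_neg he]
    obtain ⟨i, hi⟩ : ∃ i, e i ≠ 0 := by
      by_contra h
      push_neg at h
      exact he (funext h)
    refine Finset.prod_eq_zero (Finset.mem_univ i) ?_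
    rcases zmod2_cases (e i) with h | h
    · exact absurd h hi
    · rw [h, sum_zmod2]
      norm_num [show ZMod.val (1 : ZMod 2) = 1 from rfl]

lemma digits_sum (m v : ℕ) :
    ∑ j : Fin m, v / 2 ^ (j : ℕ) % 2 * 2 ^ (j : ℕ) = v % 2 ^ m := by
  induction m with
  | zero => simp [Nat.mod_one]
  | succ m ih =>
    rw [Fin.sum_univ_castSucc]
    simp only [Fin.coe_castSucc, Fin.val_last]
    rw [ih, Nat.mod_pow_succ]
    ring

lemma iota_digits (m v : ℕ) :
    (iotaF (fun j : Fin m => ((v / 2 ^ (j : ℕ) : ℕ) : ZMod 2))).val = v % 2 ^ m := by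
  have h : iotaF (fun j : Fin m => ((v / 2 ^ (j : ℕ) : ℕ) : ZMod 2))
      = ((v % 2 ^ m : ℕ) : ZMod (2 ^ m)) := by
    rw [iotaF, ← digits_sum m v]
    push_cast
    refine Finset.sum_congr rfl fun j _ => ?_
    rw [ZMod.val_natCast]
  rw [h, ZMod.val_natCast, Nat.mod_mod_of_dvd _ dvd_rfl]

lemma zeta_pow_half (m : ℕ) : zetaQ (2 ^ (m + 1)) ^ (2 ^ m) = -1 := by
  rw [zetaQ, ← Complex.exp_nat_mul]
  have h2 : ((2 : ℂ)) ^ (m + 1) ≠ 0 := pow_ne_zero _ two_ne_zero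
  have : ((2 ^ m : ℕ) : ℂ) * (2 * Real.pi * Complex.I / ((2 ^ (m + 1) : ℕ) : ℂ))
      = Real.pi * Complex.I := by
    push_cast
    rw [pow_succ]
    field_simp
  rw [this, Complex.exp_pi_mul_I]

lemma zeta_split (m v : ℕ) :
    zetaQ (2 ^ (m + 1)) ^ v
      = zetaQ (2 ^ (m + 1)) ^ (v % 2 ^ m) * (-1 : ℂ) ^ (v / 2 ^ m) := by
  conv_lhs => rw [← Nat.div_add_mod v (2 ^ m)]
  rw [pow_add, pow_mul, zeta_pow_half]
  ring

lemma key (m v : ℕ) :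
    ∑ c : Fin m → ZMod 2, ∑ d : Fin m → ZMod 2,
      (-1 : ℂ) ^ (∑ i, ((c i * d i)).val) * zetaQ (2 ^ (m + 1)) ^ (iotaF d).val *
        (-1 : ℂ) ^ ((∑ j : Fin m, c j * ((v / 2 ^ (j : ℕ) : ℕ) : ZMod 2))
          + ((v / 2 ^ m : ℕ) : ZMod 2)).val
    = 2 ^ m * zetaQ (2 ^ (m + 1)) ^ v := by
  classical
  set b : Fin m → ZMod 2 := fun j => ((v / 2 ^ (j : ℕ) : ℕ) : ZMod 2) with hbdef
  set t : ZMod 2 := ((v / 2 ^ m : ℕ) : ZMod 2) with htdef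
  have step1 : ∀ (c d : Fin m → ZMod 2),
      (-1 : ℂ) ^ (∑ i, ((c i * d i)).val) * zetaQ (2 ^ (m + 1)) ^ (iotaF d).val *
        (-1 : ℂ) ^ ((∑ j : Fin m, c j * b j) + t).val
      = zetaQ (2 ^ (m + 1)) ^ (iotaF d).val * (-1 : ℂ) ^ t.val *
          ∏ i, (-1 : ℂ) ^ ((c i * (d i + b i)).val) := by
    intro c d
    have hprod : (∏ i, (-1 : ℂ) ^ ((c i * d i)).val) * (∏ i, (-1 : ℂ) ^ ((c i * b i)).val)
        = ∏ i, (-1 : ℂ) ^ ((c i * (d i + b i)).val) := by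
      rw [← Finset.prod_mul_distrib]
      exact Finset.prod_congr rfl fun i _ => by rw [mul_add, chi_add]
    rw [chi_add, chi_sum, pow_nat_sum, ← hprod]
    ring
  calc ∑ c : Fin m → ZMod 2, ∑ d : Fin m → ZMod 2,
      (-1 : ℂ) ^ (∑ i, ((c i * d i)).val) * zetaQ (2 ^ (m + 1)) ^ (iotaF d).val *
        (-1 : ℂ) ^ ((∑ j : Fin m, c j * b j) + t).val
      = ∑ d : Fin m → ZMod 2, ∑ c : Fin m → ZMod 2,
          zetaQ (2 ^ (m + 1)) ^ (iotaF d).val * (-1 : ℂ) ^ t.val *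
            ∏ i, (-1 : ℂ) ^ ((c i * (d i + b i)).val) := by
        rw [Finset.sum_comm]
        exact Finset.sum_congr rfl fun d _ => Finset.sum_congr rfl fun c _ => step1 c d
    _ = ∑ d : Fin m → ZMod 2,
          zetaQ (2 ^ (m + 1)) ^ (iotaF d).val * (-1 : ℂ) ^ t.val *
            (if d + b = 0 then (2 : ℂ) ^ m else 0) := by
        refine Finset.sum_congr rfl fun d _ => ?_
        have horth := orth m (d + b)
        simp only [Pi.add_apply] at horth
        rw [← Finset.mul_sum, horth]
    _ = ∑ d : Fin m → ZMod 2,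
          (if d = b then zetaQ (2 ^ (m + 1)) ^ (iotaF d).val * (-1 : ℂ) ^ t.val *
            (2 : ℂ) ^ m else 0) := by
        refine Finset.sum_congr rfl fun d _ => ?_
        have h2 : ∀ z w : ZMod 2, z + w = 0 ↔ z = w := by decide
        have hiff : d + b = 0 ↔ d = b := by
          constructor
          · intro h
            funext j
            exact (h2 _ _).1 (congrFun h j)
          · intro h
            subst h
            funext j
            exact (h2 _ _).2 rfl
        by_cases hd : d = b
        · rw [if_pos hd, if_pos (hiff.2 hd)]
        · rw [if_neg hd, if_neg (fun h => hd (hiff.1 h)), mul_zero]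
    _ = zetaQ (2 ^ (m + 1)) ^ (iotaF b).val * (-1 : ℂ) ^ t.val * (2 : ℂ) ^ m := by
        rw [Finset.sum_ite_eq' Finset.univ b
          (fun d => zetaQ (2 ^ (m + 1)) ^ (iotaF d).val * (-1 : ℂ) ^ t.val * (2 : ℂ) ^ m)]
        simp
    _ = 2 ^ m * zetaQ (2 ^ (m + 1)) ^ v := by
        rw [hbdef, iota_digits, htdef, neg_one_pow_zmod, zeta_split m v]
        ring

/-- Lemma 4: `2^{k-1}·H_f(a) = Σ_{(c,d)} (−1)^{c·d} ζ^{ι(d)} W_{f_c}(a)`. -/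
theorem stmt2 (n k : ℕ) (hn : 1 ≤ n) (hk : 1 ≤ k)
    (f : (Fin n → ZMod 2) → ZMod (2 ^ k)) (a : Fin n → ZMod 2) :
    (2 : ℂ) ^ (k - 1) * gWHT (2 ^ k) f a =
      ∑ c : Fin (k - 1) → ZMod 2, ∑ d : Fin (k - 1) → ZMod 2,
        (-1 : ℂ) ^ (∑ i, (c i * d i).val) * zetaQ (2 ^ k) ^ (iotaF d).val *
          bWHT (comp f c) a := by
  obtain ⟨m, rfl⟩ : ∃ m, k = m + 1 := ⟨k - 1, (Nat.succ_pred_eq_of_pos hk).symm⟩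
  have hk1 : m + 1 - 1 = m := rfl
  rw [gWHT, Finset.mul_sum]
  simp only [bWHT, Finset.mul_sum]
  rw [show (∑ c : Fin (m + 1 - 1) → ZMod 2, ∑ d : Fin (m + 1 - 1) → ZMod 2,
      ∑ x : Fin n → ZMod 2,
        (-1 : ℂ) ^ (∑ i, (c i * d i).val) * zetaQ (2 ^ (m + 1)) ^ (iotaF d).val *
          (-1 : ℂ) ^ (comp f c x + ∑ i, a i * x i).val)
    = ∑ x : Fin n → ZMod 2, ∑ c : Fin (m + 1 - 1) → ZMod 2, ∑ d : Fin (m + 1 - 1) → ZMod 2,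
        (-1 : ℂ) ^ (∑ i, (c i * d i).val) * zetaQ (2 ^ (m + 1)) ^ (iotaF d).val *
          (-1 : ℂ) ^ (comp f c x + ∑ i, a i * x i).val from ?_]
  · refine Finset.sum_congr rfl fun x _ => ?_
    have hsplit : ∀ c : Fin (m + 1 - 1) → ZMod 2,
        (-1 : ℂ) ^ (comp f c x + ∑ i, a i * x i).val
        = (-1 : ℂ) ^ (comp f c x).val * (-1 : ℂ) ^ (∑ i, (a i * x i).val) := by
      intro c
      rw [chi_add, chi_sum]
      rw [pow_nat_sum]
    calc (2 : ℂ) ^ (m + 1 - 1) *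
          (zetaQ (2 ^ (m + 1)) ^ (f x).val * (-1 : ℂ) ^ (∑ i, (a i * x i).val))
        = (2 ^ m * zetaQ (2 ^ (m + 1)) ^ (f x).val) * (-1 : ℂ) ^ (∑ i, (a i * x i).val) := by
          rw [hk1]; ring
      _ = (∑ c : Fin m → ZMod 2, ∑ d : Fin m → ZMod 2,
            (-1 : ℂ) ^ (∑ i, ((c i * d i)).val) * zetaQ (2 ^ (m + 1)) ^ (iotaF d).val *
              (-1 : ℂ) ^ ((∑ j : Fin m, c j * (((f x).val / 2 ^ (j : ℕ) : ℕ) : ZMod 2))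
                + (((f x).val / 2 ^ m : ℕ) : ZMod 2)).val) *
            (-1 : ℂ) ^ (∑ i, (a i * x i).val) := by
          rw [key m (f x).val]
      _ = ∑ c : Fin (m + 1 - 1) → ZMod 2, ∑ d : Fin (m + 1 - 1) → ZMod 2,
            (-1 : ℂ) ^ (∑ i, (c i * d i).val) * zetaQ (2 ^ (m + 1)) ^ (iotaF d).val *
              (-1 : ℂ) ^ (comp f c x + ∑ i, a i * x i).val := by
          rw [Finset.sum_mul]
          refine Finset.sum_congr rfl fun c _ => ?_
          rw [Finset.sum_mul]
          refine Finset.sum_congr rfl fun d _ => ?_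
          rw [hsplit c, ← mul_assoc]
          rfl
  · exact Eq.trans (Finset.sum_congr rfl fun c _ => Finset.sum_comm) Finset.sum_comm
end

section
/- Let n ≥ 1, k ≥ 2, q = 2^k, and let f : 𝔽₂ⁿ → ℤ_q be a generalized Boolean function. For every fixed a ∈ 𝔽₂ⁿ: H_f(a) = 0 if and only if W_{f_c}(a) = 0 for every c ∈ 𝔽₂^{k−1}. -/
open scoped BigOperators

namespace S3

def AccN {n : ℕ} (a x : Fin n → ZMod 2) : ℕ := ∑ i, (a i * x i).val

def lowD (m : ℕ) {n q : ℕ} (f : (Fin n → ZMod 2) → ZMod q) (x : Fin n → ZMod 2) :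
    Fin m → ZMod 2 := fun j => digit f (j : ℕ) x

def valv {m : ℕ} (d : Fin m → ZMod 2) : ℕ := ∑ j, (d j).val * 2 ^ (j : ℕ)

def Mco (m : ℕ) {n q : ℕ} (f : (Fin n → ZMod 2) → ZMod q) (a : Fin n → ZMod 2)
    (d : Fin m → ZMod 2) : ℤ :=
  ∑ x, if lowD m f x = d then (-1) ^ ((digit f m x).val + AccN a x) else 0

lemma neg_one_pow_mod_two (N : ℕ) : (-1 : ℂ) ^ N = (-1) ^ (N % 2) := by
  conv_lhs => rw [← Nat.div_add_mod N 2]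
  rw [pow_add, pow_mul]
  norm_num

lemma neg_one_pow_natCast (z : ZMod 2) (N : ℕ) (h : (N : ZMod 2) = z) :
    (-1 : ℂ) ^ N = (-1) ^ z.val := by
  subst h
  rw [ZMod.val_natCast]
  exact neg_one_pow_mod_two N

lemma valv_eq {m : ℕ} (d : Fin m → ZMod 2) :
    valv d = ((finFunctionFinEquiv (show Fin m → Fin 2 from d) : Fin (2 ^ m)) : ℕ) :=
  (finFunctionFinEquiv_apply _).symm

lemma valv_lt {m : ℕ} (d : Fin m → ZMod 2) : valv d < 2 ^ m := by
  rw [valv_eq]; exact (finFunctionFinEquiv _).isLt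

lemma valv_inj {m : ℕ} {d e : Fin m → ZMod 2} (h : valv d = valv e) : d = e := by
  rw [valv_eq, valv_eq] at h
  exact finFunctionFinEquiv.injective (Fin.val_injective h)

lemma sum_bits {M : ℕ} (v : ℕ) (hv : v < 2 ^ M) :
    ∑ i : Fin M, (v / 2 ^ (i : ℕ) % 2) * 2 ^ (i : ℕ) = v := by
  have h1 : ((finFunctionFinEquiv (finFunctionFinEquiv.symm (⟨v, hv⟩ : Fin (2 ^ M))) :
      Fin (2 ^ M)) : ℕ) = v := by
    rw [Equiv.apply_symm_apply]
  rw [finFunctionFinEquiv_apply] at h1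
  exact h1

lemma zeta_pow_half (m : ℕ) : zetaQ (2 ^ (m + 1)) ^ (2 ^ m) = -1 := by
  rw [zetaQ, ← Complex.exp_nat_mul, ← Complex.exp_pi_mul_I]
  congr 1
  have h2 : ((2 : ℕ) ^ (m + 1) : ℂ) ≠ 0 := by
    exact_mod_cast pow_ne_zero (m + 1) (two_ne_zero)
  field_simp
  rw [pow_succ]
  push_cast
  ring

lemma val_decomp {n m : ℕ} (f : (Fin n → ZMod 2) → ZMod (2 ^ (m + 1))) (x : Fin n → ZMod 2) :
    (f x).val = valv (lowD m f x) + (digit f m x).val * 2 ^ m := by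
  have : NeZero (2 ^ (m + 1)) := ⟨by positivity⟩
  have hv : (f x).val < 2 ^ (m + 1) := ZMod.val_lt _
  conv_lhs => rw [← sum_bits (f x).val hv]
  rw [Fin.sum_univ_castSucc]
  simp only [lowD, valv, digit, ZMod.val_natCast, Fin.coe_castSucc, Fin.val_last]

lemma zeta_decomp {n m : ℕ} (f : (Fin n → ZMod 2) → ZMod (2 ^ (m + 1))) (x : Fin n → ZMod 2) :
    zetaQ (2 ^ (m + 1)) ^ (f x).val
      = zetaQ (2 ^ (m + 1)) ^ valv (lowD m f x) * (-1 : ℂ) ^ (digit f m x).val := by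
  rw [val_decomp f x, pow_add, mul_comm ((digit f m x).val) (2 ^ m), pow_mul, zeta_pow_half]

lemma group_gen {α β : Type} [Fintype α] [Fintype β] [DecidableEq β]
    (L : α → β) (F : β → ℂ) (s : α → ℂ) :
    ∑ x : α, F (L x) * s x = ∑ d : β, F d * (∑ x : α, if L x = d then s x else 0) := by
  have h : ∀ x : α, F (L x) * s x = ∑ d : β, if L x = d then F d * s x else 0 := by
    intro x
    rw [Finset.sum_ite_eq Finset.univ (L x) (fun d => F d * s x)]
    simp
  rw [Finset.sum_congr rfl fun x _ => h x, Finset.sum_comm]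
  apply Finset.sum_congr rfl
  intro d _
  rw [Finset.mul_sum]
  apply Finset.sum_congr rfl
  intro x _
  rw [mul_ite, mul_zero]

lemma Mco_cast {n m q : ℕ} (f : (Fin n → ZMod 2) → ZMod q) (a : Fin n → ZMod 2)
    (d : Fin m → ZMod 2) :
    ((Mco m f a d : ℤ) : ℂ)
      = ∑ x : Fin n → ZMod 2,
          if lowD m f x = d then (-1 : ℂ) ^ ((digit f m x).val + AccN a x) else 0 := by
  rw [Mco]
  push_cast
  rfl

lemma group_sum {n m : ℕ} (f : (Fin n → ZMod 2) → ZMod (2 ^ (m + 1))) (a : Fin n → ZMod 2)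
    (F : (Fin m → ZMod 2) → ℂ) :
    ∑ x : Fin n → ZMod 2, F (lowD m f x) * (-1 : ℂ) ^ ((digit f m x).val + AccN a x)
      = ∑ d : Fin m → ZMod 2, F d * ((Mco m f a d : ℤ) : ℂ) := by
  rw [group_gen (lowD m f) F (fun x => (-1 : ℂ) ^ ((digit f m x).val + AccN a x))]
  exact Finset.sum_congr rfl fun d _ => by rw [Mco_cast]

lemma H_eq {n m : ℕ} (f : (Fin n → ZMod 2) → ZMod (2 ^ (m + 1))) (a : Fin n → ZMod 2) :
    gWHT (2 ^ (m + 1)) f a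
      = ∑ d : Fin m → ZMod 2, zetaQ (2 ^ (m + 1)) ^ valv d * ((Mco m f a d : ℤ) : ℂ) := by
  rw [gWHT, ← group_sum f a (fun d => zetaQ (2 ^ (m + 1)) ^ valv d)]
  apply Finset.sum_congr rfl
  intro x _
  rw [zeta_decomp f x, AccN]
  ring

lemma W_eq {n m : ℕ} (f : (Fin n → ZMod 2) → ZMod (2 ^ (m + 1))) (a : Fin n → ZMod 2)
    (c : Fin m → ZMod 2) :
    bWHT (comp f c) a
      = ∑ d : Fin m → ZMod 2,
          (-1 : ℂ) ^ (∑ j, (c j * d j).val) * ((Mco m f a d : ℤ) : ℂ) := by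
  rw [bWHT, ← group_sum f a (fun d => (-1 : ℂ) ^ (∑ j, (c j * d j).val))]
  apply Finset.sum_congr rfl
  intro x _
  have hcast : (((∑ j : Fin m, (c j * lowD m f x j).val)
        + ((digit f m x).val + AccN a x) : ℕ) : ZMod 2)
      = comp f c x + ∑ i, a i * x i := by
    push_cast
    simp only [ZMod.natCast_val, ZMod.cast_id]
    rw [comp, AccN]
    push_cast
    simp only [ZMod.natCast_val, ZMod.cast_id, lowD]
    exact (add_assoc _ _ _).symm
  rw [← neg_one_pow_natCast _ _ hcast, pow_add]

open Polynomial in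
lemma coeffs_zero {m : ℕ} (M : (Fin m → ZMod 2) → ℤ)
    (h : ∑ d : Fin m → ZMod 2, zetaQ (2 ^ (m + 1)) ^ valv d * (M d : ℂ) = 0) :
    ∀ d, M d = 0 := by
  classical
  have hq : (2 : ℕ) ^ (m + 1) ≠ 0 := by positivity
  have hζ : IsPrimitiveRoot (zetaQ (2 ^ (m + 1))) (2 ^ (m + 1)) := by
    simpa [zetaQ] using Complex.isPrimitiveRoot_exp (2 ^ (m + 1)) hq
  set P : ℚ[X] := ∑ d : Fin m → ZMod 2, C ((M d : ℚ)) * X ^ valv d with hP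
  have haev : aeval (zetaQ (2 ^ (m + 1))) P = 0 := by
    rw [hP, map_sum]
    rw [← h]
    apply Finset.sum_congr rfl
    intro d _
    rw [map_mul, aeval_C, map_pow, aeval_X, mul_comm]
    norm_num
  have hdeg : P.degree < ((2 ^ m : ℕ) : WithBot ℕ) := by
    refine lt_of_le_of_lt (Polynomial.degree_sum_le _ _) ?_
    rw [Finset.sup_lt_iff (by exact WithBot.bot_lt_coe _)]
    intro d _
    refine lt_of_le_of_lt (degree_C_mul_X_pow_le _ _) ?_
    exact_mod_cast valv_lt d
  have hP0 : P = 0 := by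
    by_contra hne
    have hle := minpoly.degree_le_of_ne_zero ℚ (zetaQ (2 ^ (m + 1))) hne haev
    rw [← Polynomial.cyclotomic_eq_minpoly_rat hζ (Nat.pos_of_ne_zero hq),
      Polynomial.degree_cyclotomic] at hle
    have ht : Nat.totient (2 ^ (m + 1)) = 2 ^ m := by
      rw [Nat.totient_prime_pow Nat.prime_two (Nat.succ_pos m)]
      simp
    rw [ht] at hle
    exact absurd (lt_of_le_of_lt hle hdeg) (lt_irrefl _)
  intro e
  have hc : P.coeff (valv e) = (M e : ℚ) := by
    rw [hP, Polynomial.finset_sum_coeff]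
    have hterm : ∀ d : Fin m → ZMod 2,
        (C ((M d : ℚ)) * X ^ valv d).coeff (valv e) = if d = e then (M d : ℚ) else 0 := by
      intro d
      rw [coeff_C_mul, coeff_X_pow]
      by_cases hde : d = e
      · subst hde; simp
      · have hvv : valv e ≠ valv d := fun hh => hde (valv_inj hh.symm)
        simp [hde, hvv]
    rw [Finset.sum_congr rfl fun d _ => hterm d,
      Finset.sum_ite_eq' Finset.univ e (fun d => (M d : ℚ))]
    simp
  rw [hP0] at hc
  simp only [coeff_zero] at hc
  exact_mod_cast hc.symm

lemma sum_zmod2 (g : ZMod 2 → ℂ) : ∑ b : ZMod 2, g b = g 0 + g 1 := Fin.sum_univ_two g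

lemma cell (u v : ZMod 2) :
    (∑ b : ZMod 2, (-1 : ℂ) ^ ((b * u).val + (b * v).val)) = if u = v then 2 else 0 := by
  rw [sum_zmod2]
  have h01 : ∀ z : ZMod 2, z = 0 ∨ z = 1 := by decide
  have h10 : (1 : ZMod 2) ≠ 0 := by decide
  rcases h01 u with rfl | rfl <;> rcases h01 v with rfl | rfl <;> norm_num [ZMod.val_one, h10, h10.symm]

lemma ortho {m : ℕ} (d e : Fin m → ZMod 2) :
    ∑ c : Fin m → ZMod 2,
        (-1 : ℂ) ^ (∑ j, (c j * e j).val) * (-1 : ℂ) ^ (∑ j, (c j * d j).val)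
      = if d = e then ((2 ^ m : ℕ) : ℂ) else 0 := by
  classical
  have h1 : ∀ c : Fin m → ZMod 2,
      (-1 : ℂ) ^ (∑ j, (c j * e j).val) * (-1 : ℂ) ^ (∑ j, (c j * d j).val)
        = ∏ j, (-1 : ℂ) ^ ((c j * e j).val + (c j * d j).val) := by
    intro c
    rw [Finset.prod_congr rfl fun j _ => pow_add (-1 : ℂ) _ _, Finset.prod_mul_distrib,
      Finset.prod_pow_eq_pow_sum, Finset.prod_pow_eq_pow_sum]
  rw [Finset.sum_congr rfl fun c _ => h1 c]
  rw [← Fintype.piFinset_univ,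
    ← Finset.prod_univ_sum (fun _ : Fin m => (Finset.univ : Finset (ZMod 2)))
      (fun j b => (-1 : ℂ) ^ ((b * e j).val + (b * d j).val))]
  have h2 : ∀ j, (∑ b : ZMod 2, (-1 : ℂ) ^ ((b * e j).val + (b * d j).val))
      = if e j = d j then 2 else 0 := fun j => cell (e j) (d j)
  rw [Finset.prod_congr rfl fun j _ => h2 j]
  by_cases hde : d = e
  · subst hde
    simp [Finset.prod_const]
  · obtain ⟨j, hj⟩ := Function.ne_iff.mp hde
    rw [if_neg hde]
    exact Finset.prod_eq_zero (Finset.mem_univ j) (by rw [if_neg (fun hh => hj hh.symm)])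

lemma Wzero {m : ℕ} (M : (Fin m → ZMod 2) → ℤ)
    (hW : ∀ c : Fin m → ZMod 2,
      ∑ d : Fin m → ZMod 2, (-1 : ℂ) ^ (∑ j, (c j * d j).val) * (M d : ℂ) = 0) :
    ∀ e, M e = 0 := by
  intro e
  have h0 : ∑ c : Fin m → ZMod 2, (-1 : ℂ) ^ (∑ j, (c j * e j).val)
      * (∑ d : Fin m → ZMod 2, (-1 : ℂ) ^ (∑ j, (c j * d j).val) * (M d : ℂ)) = 0 := by
    simp [hW]
  have h1 : ∑ c : Fin m → ZMod 2, (-1 : ℂ) ^ (∑ j, (c j * e j).val)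
      * (∑ d : Fin m → ZMod 2, (-1 : ℂ) ^ (∑ j, (c j * d j).val) * (M d : ℂ))
      = ∑ d : Fin m → ZMod 2,
          (∑ c : Fin m → ZMod 2,
            (-1 : ℂ) ^ (∑ j, (c j * e j).val) * (-1 : ℂ) ^ (∑ j, (c j * d j).val)) * (M d : ℂ) := by
    rw [Finset.sum_congr rfl fun c _ => Finset.mul_sum Finset.univ _ _, Finset.sum_comm]
    apply Finset.sum_congr rfl
    intro d _
    rw [Finset.sum_mul]
    exact Finset.sum_congr rfl fun c _ => (mul_assoc _ _ _).symm
  rw [h1, Finset.sum_congr rfl fun d _ => by rw [ortho d e]] at h0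
  simp only [ite_mul, zero_mul, Finset.sum_ite_eq' Finset.univ, Finset.mem_univ,
    if_true] at h0
  have h2 : ((2 ^ m : ℕ) : ℂ) ≠ 0 := by
    exact_mod_cast pow_ne_zero m (two_ne_zero)
  rcases mul_eq_zero.mp h0 with h | h
  · exact absurd h h2
  · exact_mod_cast h

end S3

/-- Theorem 5(i): `H_f(a) = 0` iff all component transforms vanish at `a`. -/
theorem stmt3 (n k : ℕ) (hn : 1 ≤ n) (hk : 2 ≤ k)
    (f : (Fin n → ZMod 2) → ZMod (2 ^ k)) (a : Fin n → ZMod 2) :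
    gWHT (2 ^ k) f a = 0 ↔ ∀ c : Fin (k - 1) → ZMod 2, bWHT (comp f c) a = 0 := by
  obtain ⟨m, rfl⟩ : ∃ m, k = m + 1 := ⟨k - 1, by omega⟩
  constructor
  · intro hH c
    have hM : ∀ d, S3.Mco m f a d = 0 :=
      S3.coeffs_zero _ (by rw [← S3.H_eq f a, hH])
    rw [S3.W_eq f a c]
    simp [hM]
  · intro hW
    have hM : ∀ d, S3.Mco m f a d = 0 := by
      apply S3.Wzero
      intro c
      rw [← S3.W_eq f a c]
      exact hW c
    rw [S3.H_eq f a]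
    simp [hM]
end

section
/- Let n ≥ 1, k ≥ 1, q = 2^k, a ∈ {0,1}, let f : 𝔽₂ⁿ → ℤ_q be a generalized Boolean function, and define g : 𝔽₂ⁿ × 𝔽₂ → ℤ_q by g(x,y) = f(x) + 2^{k−1}·a·y (viewing y ∈ {0,1} in ℤ_q). Then for every u ∈ 𝔽₂ⁿ and v ∈ 𝔽₂, H_g(u,v) = (1 + (−1)^{a+v})·H_f(u); in particular |H_g(u,v)| ∈ {0, 2|H_f(u)|}. -/
open scoped BigOperators

/-- Generalized Walsh–Hadamard transform for a function on `𝔽₂ⁿ × 𝔽₂`. -/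
noncomputable def gWHTx {n : ℕ} (q : ℕ) (g : (Fin n → ZMod 2) → ZMod 2 → ZMod q)
    (u : Fin n → ZMod 2) (v : ZMod 2) : ℂ :=
  ∑ x : Fin n → ZMod 2, ∑ y : ZMod 2,
    zetaQ q ^ (g x y).val * (-1 : ℂ) ^ ((∑ i, (u i * x i).val) + (v * y).val)

lemma pow_mod_of_pow_eq_one {q : ℕ} {z : ℂ} (hz : z ^ q = 1) (m : ℕ) :
    z ^ m = z ^ (m % q) := by
  conv_lhs => rw [← Nat.div_add_mod m q]
  rw [pow_add, pow_mul, hz, one_pow, one_mul]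

lemma zetaQ_pow_self {q : ℕ} (hq : q ≠ 0) : zetaQ q ^ q = 1 := by
  rw [zetaQ, ← Complex.exp_nat_mul]
  have hq' : (q : ℂ) ≠ 0 := Nat.cast_ne_zero.mpr hq
  rw [show (q : ℂ) * (2 * Real.pi * Complex.I / q) = 2 * Real.pi * Complex.I by
    field_simp]
  exact Complex.exp_two_pi_mul_I

lemma zetaQ_pow_half {k : ℕ} (hk : 1 ≤ k) :
    zetaQ (2 ^ k) ^ (2 ^ (k - 1)) = -1 := by
  rw [zetaQ, ← Complex.exp_nat_mul]
  have h2 : ((2 : ℕ) ^ k : ℂ) = 2 * ((2 : ℕ) ^ (k - 1) : ℂ) := by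
    push_cast
    rw [← pow_succ']
    congr 1
    omega
  have hne : (2 : ℂ) ^ (k - 1) ≠ 0 := pow_ne_zero _ two_ne_zero
  rw [show ((2 ^ (k - 1) : ℕ) : ℂ) * (2 * Real.pi * Complex.I / ((2 ^ k : ℕ) : ℂ))
      = Real.pi * Complex.I by
    push_cast at h2 ⊢
    rw [h2]
    field_simp]
  exact Complex.exp_pi_mul_I

lemma zetaQ_pow_val_add {q : ℕ} [NeZero q] (m1 m2 : ZMod q) :
    zetaQ q ^ (m1 + m2).val = zetaQ q ^ m1.val * zetaQ q ^ m2.val := by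
  rw [ZMod.val_add, ← pow_mod_of_pow_eq_one (zetaQ_pow_self (NeZero.ne q)), pow_add]

/-- Proposition 7, transform computation: for
`g(x,y) = f(x) + 2^{k-1}·a·y` one has `H_g(u,v) = (1 + (−1)^{a+v})·H_f(u)`;
in particular `|H_g(u,v)| ∈ {0, 2|H_f(u)|}`. -/
theorem stmt8 (n k : ℕ) (hn : 1 ≤ n) (hk : 1 ≤ k) (a : ZMod 2)
    (f : (Fin n → ZMod 2) → ZMod (2 ^ k)) :
    ∀ (u : Fin n → ZMod 2) (v : ZMod 2),
      (gWHTx (2 ^ k)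
          (fun x y => f x + 2 ^ (k - 1) * (a.val : ZMod (2 ^ k)) * (y.val : ZMod (2 ^ k)))
          u v
        = (1 + (-1 : ℂ) ^ (a + v).val) * gWHT (2 ^ k) f u) ∧
      (‖gWHTx (2 ^ k)
          (fun x y => f x + 2 ^ (k - 1) * (a.val : ZMod (2 ^ k)) * (y.val : ZMod (2 ^ k)))
          u v‖ = 0 ∨
       ‖gWHTx (2 ^ k)
          (fun x y => f x + 2 ^ (k - 1) * (a.val : ZMod (2 ^ k)) * (y.val : ZMod (2 ^ k)))
          u v‖ = 2 * ‖gWHT (2 ^ k) f u‖) := by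
  intro u v
  have hq : (2 : ℕ) ^ k ≠ 0 := pow_ne_zero k (by norm_num)
  haveI : NeZero ((2 : ℕ) ^ k) := ⟨hq⟩
  have hza : zetaQ (2 ^ k) ^ (2 ^ (k - 1) * (a.val : ZMod (2 ^ k))).val
      = (-1 : ℂ) ^ a.val := by
    have ha : a = 0 ∨ a = 1 := by revert a; decide
    rcases ha with rfl | rfl
    · have e0 : (((0 : ZMod 2).val : ℕ) : ZMod (2 ^ k)) = 0 := by
        rw [ZMod.val_zero]; exact Nat.cast_zero
      simp only [e0, ZMod.val_zero, Nat.cast_zero, mul_zero, pow_zero]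
    · have h1 : (((1 : ZMod 2).val : ℕ) : ZMod (2 ^ k)) = 1 := by
        rw [ZMod.val_one]; exact Nat.cast_one
      rw [h1, mul_one]
      have hlt : 2 ^ (k - 1) < 2 ^ k := Nat.pow_lt_pow_right (by norm_num) (by omega)
      have hval : ((2 : ZMod (2 ^ k)) ^ (k - 1)).val = 2 ^ (k - 1) := by
        have : ((2 : ZMod (2 ^ k)) ^ (k - 1)) = ((2 ^ (k - 1) : ℕ) : ZMod (2 ^ k)) := by
          push_cast; ring
        rw [this, ZMod.val_natCast_of_lt hlt]
      rw [hval, zetaQ_pow_half hk, ZMod.val_one, pow_one]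
  have hpar : (-1 : ℂ) ^ (a + v).val = (-1 : ℂ) ^ a.val * (-1 : ℂ) ^ v.val := by
    rw [ZMod.val_add, ← pow_mod_of_pow_eq_one (by norm_num : (-1 : ℂ) ^ 2 = 1), pow_add]
  have key : gWHTx (2 ^ k)
      (fun x y => f x + 2 ^ (k - 1) * (a.val : ZMod (2 ^ k)) * (y.val : ZMod (2 ^ k)))
      u v = (1 + (-1 : ℂ) ^ (a + v).val) * gWHT (2 ^ k) f u := by
    unfold gWHTx gWHT
    rw [Finset.mul_sum]
    refine Finset.sum_congr rfl fun x _ => ?_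
    have hsum : ∀ F : ZMod 2 → ℂ, ∑ y : ZMod 2, F y = F 0 + F 1 := fun F => by
      rw [show (Finset.univ : Finset (ZMod 2)) = {0, 1} by decide,
        Finset.sum_pair (by decide)]
    rw [hsum]
    have e0 : (((0 : ZMod 2).val : ℕ) : ZMod (2 ^ k)) = 0 := by
      rw [ZMod.val_zero]; exact Nat.cast_zero
    have e1 : (((1 : ZMod 2).val : ℕ) : ZMod (2 ^ k)) = 1 := by
      rw [ZMod.val_one]; exact Nat.cast_one
    simp only [e0, e1, ZMod.val_zero, ZMod.val_one, Nat.cast_zero, Nat.cast_one,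
      mul_zero, mul_one, add_zero, Nat.add_zero]
    rw [zetaQ_pow_val_add, hza, hpar, pow_add]
    ring
  refine ⟨key, ?_⟩
  rw [key, norm_mul]
  have : (a + v).val = 0 ∨ (a + v).val = 1 := by
    have := ZMod.val_lt (a + v); omega
  rcases this with h | h
  · right; rw [h]; norm_num
  · left; rw [h]; norm_num
end

section
/- Let n ≥ 1, k ≥ 1, q = 2^k, a ∈ {0,1}, and let f : 𝔽₂ⁿ → ℤ_q be an s-plateaued generalized Boolean function for some integer s ≥ 0. Then g : 𝔽₂ⁿ × 𝔽₂ → ℤ_q defined by g(x,y) = f(x) + 2^{k−1}·a·y is an (s+1)-plateaued generalized Boolean function on n+1 variables. In particular, if f is generalized bent then g is 1-plateaued. -/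
open scoped BigOperators

lemma zetaQ_pow_q (q : ℕ) (hq : q ≠ 0) : zetaQ q ^ q = 1 := by
  rw [zetaQ, ← Complex.exp_nat_mul]
  rw [show (q:ℂ) * (2 * Real.pi * Complex.I / q) = 2 * Real.pi * Complex.I by
    have : (q:ℂ) ≠ 0 := Nat.cast_ne_zero.mpr hq
    field_simp]
  exact Complex.exp_two_pi_mul_I

lemma zetaQ_val_add (q : ℕ) [NeZero q] (s t : ZMod q) :
    zetaQ q ^ (s + t).val = zetaQ q ^ s.val * zetaQ q ^ t.val := by
  rw [← pow_add]
  conv_rhs => rw [← Nat.div_add_mod (s.val + t.val) q]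
  rw [pow_add, pow_mul, zetaQ_pow_q q (NeZero.ne q), one_pow, one_mul, ZMod.val_add]

lemma zetaQ_half (k : ℕ) (hk : 1 ≤ k) : zetaQ (2^k) ^ (2^(k-1)) = -1 := by
  rw [zetaQ, ← Complex.exp_nat_mul]
  rw [show ((2^(k-1):ℕ):ℂ) * (2 * Real.pi * Complex.I / (2^k:ℕ)) = Real.pi * Complex.I by
    have h : (2:ℂ)^k = 2 * 2^(k-1) := by
      rw [← pow_succ']
      congr 1; omega
    push_cast
    rw [h]
    have h2 : (2:ℂ)^(k-1) ≠ 0 := pow_ne_zero _ two_ne_zero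
    field_simp]
  exact Complex.exp_pi_mul_I

lemma zetaQ_c (k : ℕ) (hk : 1 ≤ k) (a : ZMod 2) :
    zetaQ (2^k) ^ ((2 ^ (k-1) * (a.val : ZMod (2^k))) : ZMod (2^k)).val
      = (-1 : ℂ) ^ a.val := by
  have hlt : a.val < 2 := a.val_lt
  interval_cases h : a.val
  · simp [h]
  · have : ((2 ^ (k-1) * ((1:ℕ) : ZMod (2^k))) : ZMod (2^k)) = ((2^(k-1) : ℕ) : ZMod (2^k)) := by
      push_cast; ring
    rw [this, ZMod.val_cast_of_lt (by exact Nat.pow_lt_pow_right (by norm_num) (by omega))]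
    rw [zetaQ_half k hk]
    norm_num

lemma stmt9_key (n k : ℕ) (hk : 1 ≤ k) (a : ZMod 2) (f : (Fin n → ZMod 2) → ZMod (2^k))
    (u : Fin n → ZMod 2) (v : ZMod 2) :
    gWHTx (2^k) (fun x y => f x + 2^(k-1) * (a.val:ZMod (2^k)) * (y.val:ZMod (2^k))) u v
      = gWHT (2^k) f u * (1 + (-1:ℂ)^(a.val + v.val)) := by
  have : NeZero (2^k) := ⟨by positivity⟩
  rw [gWHTx, gWHT, Finset.sum_mul]
  refine Finset.sum_congr rfl fun x _ => ?_
  rw [show (Finset.univ : Finset (ZMod 2)) = {0, 1} by decide]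
  rw [Finset.sum_insert (by decide), Finset.sum_singleton]
  have h0 : ((0:ZMod 2)).val = 0 := rfl
  have h1 : ((1:ZMod 2)).val = 1 := rfl
  simp only [h0, h1, Nat.cast_zero, Nat.cast_one, mul_zero, mul_one, add_zero]
  rw [zetaQ_val_add, zetaQ_c k hk a]
  rw [pow_add, pow_add]
  ring

lemma stmt9_plateau (n k : ℕ) (hk : 1 ≤ k) (a : ZMod 2)
    (f : (Fin n → ZMod 2) → ZMod (2^k)) (r : ℝ)
    (hf : ∀ u, Norm.norm (gWHT (2^k) f u) = 0 ∨ Norm.norm (gWHT (2^k) f u) = r)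
    (u : Fin n → ZMod 2) (v : ZMod 2) :
    Norm.norm (gWHTx (2^k)
        (fun x y => f x + 2^(k-1) * (a.val:ZMod (2^k)) * (y.val:ZMod (2^k))) u v) = 0 ∨
    Norm.norm (gWHTx (2^k)
        (fun x y => f x + 2^(k-1) * (a.val:ZMod (2^k)) * (y.val:ZMod (2^k))) u v) = 2 * r := by
  rw [stmt9_key n k hk a f u v, norm_mul]
  rcases Nat.even_or_odd (a.val + v.val) with he | ho
  · rw [he.neg_one_pow]
    rw [show Norm.norm ((1:ℂ) + 1) = 2 by norm_num]
    rcases hf u with h | h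
    · left; rw [h]; ring
    · right; rw [h]; ring
  · rw [ho.neg_one_pow]
    simp

lemma two_mul_rpow (m : ℕ) : 2 * (2:ℝ) ^ ((m : ℝ) / 2) = (2:ℝ) ^ (((m + 2 : ℕ) : ℝ) / 2) := by
  rw [show (((m + 2 : ℕ) : ℝ) / 2) = (m : ℝ) / 2 + 1 by push_cast; ring]
  rw [Real.rpow_add (by norm_num), Real.rpow_one]
  ring

/-- Proposition 7: if `f` is `s`-plateaued, then
`g(x,y) = f(x) + 2^{k-1}·a·y` is `(s+1)`-plateaued on `n+1` variables; in particular,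
if `f` is generalized bent then `g` is `1`-plateaued. -/
theorem stmt9 (n k s : ℕ) (hn : 1 ≤ n) (hk : 1 ≤ k) (a : ZMod 2)
    (f : (Fin n → ZMod 2) → ZMod (2 ^ k))
    (hf : ∀ u, Norm.norm (gWHT (2 ^ k) f u) = 0 ∨
      Norm.norm (gWHT (2 ^ k) f u) = (2 : ℝ) ^ (((n + s : ℕ) : ℝ) / 2)) :
    (∀ (u : Fin n → ZMod 2) (v : ZMod 2),
      Norm.norm (gWHTx (2 ^ k)
          (fun x y => f x + 2 ^ (k - 1) * (a.val : ZMod (2 ^ k)) * (y.val : ZMod (2 ^ k)))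
          u v) = 0 ∨
      Norm.norm (gWHTx (2 ^ k)
          (fun x y => f x + 2 ^ (k - 1) * (a.val : ZMod (2 ^ k)) * (y.val : ZMod (2 ^ k)))
          u v) = (2 : ℝ) ^ ((((n + 1) + (s + 1) : ℕ) : ℝ) / 2)) ∧
    ((∀ u, Norm.norm (gWHT (2 ^ k) f u) = (2 : ℝ) ^ ((n : ℝ) / 2)) →
      ∀ (u : Fin n → ZMod 2) (v : ZMod 2),
        Norm.norm (gWHTx (2 ^ k)
            (fun x y => f x + 2 ^ (k - 1) * (a.val : ZMod (2 ^ k)) * (y.val : ZMod (2 ^ k)))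
            u v) = 0 ∨
        Norm.norm (gWHTx (2 ^ k)
            (fun x y => f x + 2 ^ (k - 1) * (a.val : ZMod (2 ^ k)) * (y.val : ZMod (2 ^ k)))
            u v) = (2 : ℝ) ^ ((((n + 1) + 1 : ℕ) : ℝ) / 2)) := by
  constructor
  · intro u v
    have h := stmt9_plateau n k hk a f _ hf u v
    rwa [two_mul_rpow (n + s), show n + s + 2 = (n + 1) + (s + 1) by omega] at h
  · intro hbent u v
    have h := stmt9_plateau n k hk a f ((2:ℝ) ^ ((n:ℝ)/2)) (fun u => Or.inr (hbent u)) u v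
    have hn2 : ((n : ℝ)/2) = (((n:ℕ):ℝ)/2) := by norm_num
    rw [hn2, two_mul_rpow n, show n + 2 = (n + 1) + 1 by omega] at h
    exact h
end

section
/- Let n ≥ 1, k ≥ 2, q = 2^k, let s be an integer with 0 ≤ s ≤ n, and let f : 𝔽₂ⁿ → ℤ_q be a generalized Boolean function. Then f is s-plateaued if and only if for every x ∈ 𝔽₂ⁿ, Σ_{a,b ∈ 𝔽₂ⁿ} ζ^{D_b D_a f(x)} = 2^{n+s}. -/
open scoped BigOperators

namespace S14

noncomputable def eps (z : ZMod 2) : ℂ := (-1) ^ z.val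

lemma zmod2_cases (a : ZMod 2) : a = 0 ∨ a = 1 := by
  revert a; decide

lemma eps_zero : eps 0 = 1 := by simp [eps]

lemma eps_one : eps 1 = -1 := by simp [eps, ZMod.val_one]

lemma eps_add (a b : ZMod 2) : eps (a + b) = eps a * eps b := by
  rcases zmod2_cases a with rfl | rfl <;> rcases zmod2_cases b with rfl | rfl <;>
    simp [eps_zero, eps_one, show (1 + 1 : ZMod 2) = 0 from rfl]

lemma eps_sum {ι : Type*} (s : Finset ι) (g : ι → ZMod 2) :
    eps (∑ i ∈ s, g i) = ∏ i ∈ s, eps (g i) := by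
  classical
  induction s using Finset.induction with
  | empty => simp [eps_zero]
  | insert a s h ih => rw [Finset.sum_insert h, Finset.prod_insert h, eps_add, ih]

variable {n : ℕ}

noncomputable def chi (u x : Fin n → ZMod 2) : ℂ := eps (∑ i, u i * x i)

lemma chi_eq_pow (u x : Fin n → ZMod 2) :
    (-1 : ℂ) ^ (∑ i, (u i * x i).val) = chi u x := by
  rw [chi, eps_sum]
  rw [← Finset.prod_pow_eq_pow_sum]
  rfl

lemma chi_comm (u x : Fin n → ZMod 2) : chi u x = chi x u := by
  simp [chi, mul_comm]

lemma chi_add_right (u x y : Fin n → ZMod 2) :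
    chi u (x + y) = chi u x * chi u y := by
  rw [chi, chi, chi, ← eps_add, ← Finset.sum_add_distrib]
  congr 1
  exact Finset.sum_congr rfl fun i _ => by simp [Pi.add_apply, mul_add]

lemma chi_add_left (u v x : Fin n → ZMod 2) :
    chi (u + v) x = chi u x * chi v x := by
  rw [chi_comm, chi_add_right, chi_comm x u, chi_comm x v]

lemma chi_conj (u x : Fin n → ZMod 2) :
    (starRingEnd ℂ) (chi u x) = chi u x := by
  rcases zmod2_cases (∑ i, u i * x i) with h | h <;> simp [chi, h, eps_zero, eps_one]

lemma self_add_self (x : Fin n → ZMod 2) : x + x = 0 := by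
  funext i
  simp only [Pi.add_apply, Pi.zero_apply]
  rcases zmod2_cases (x i) with h | h <;> simp [h] <;> rfl

lemma add_eq_zero_iff (x y : Fin n → ZMod 2) : x + y = 0 ↔ x = y := by
  constructor
  · intro h
    have := congrArg (· + y) h
    simpa [add_assoc, self_add_self] using this
  · rintro rfl; exact self_add_self x

lemma chi_zero_left (x : Fin n → ZMod 2) : chi 0 x = 1 := by
  simp [chi, eps_zero]

lemma sum_chi (u : Fin n → ZMod 2) :
    ∑ x : Fin n → ZMod 2, chi u x = if u = 0 then (2 : ℂ) ^ n else 0 := by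
  classical
  split_ifs with h
  · subst h
    simp only [chi_zero_left]
    simp [Finset.card_univ, Fintype.card_fun]
  · have hex : ∃ i, u i ≠ 0 := by
      by_contra hc
      push_neg at hc
      exact h (funext hc)
    obtain ⟨i0, hi0⟩ := hex
    have hu1 : u i0 = 1 := by rcases zmod2_cases (u i0) with h' | h' <;> simp_all
    set t : Fin n → ZMod 2 := Pi.single i0 1 with ht
    have hchit : chi u t = -1 := by
      rw [chi]
      have hsum : ∑ i, u i * t i = u i0 := by
        rw [Finset.sum_eq_single i0]
        · simp [ht, Pi.single_eq_same]
        · intro b _ hb; simp [ht, Pi.single_eq_of_ne hb]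
        · intro hb; exact absurd (Finset.mem_univ i0) hb
      rw [hsum, hu1, eps_one]
    have key : ∑ x : Fin n → ZMod 2, chi u x
        = ∑ x : Fin n → ZMod 2, chi u (t + x) :=
      (Fintype.sum_equiv (Equiv.addLeft t) _ _ (fun x => rfl)).symm
    have hneg : ∑ x : Fin n → ZMod 2, chi u x = - ∑ x : Fin n → ZMod 2, chi u x := by
      calc ∑ x : Fin n → ZMod 2, chi u x = ∑ x : Fin n → ZMod 2, chi u (t + x) := key
        _ = ∑ x : Fin n → ZMod 2, chi u t * chi u x := by simp_rw [chi_add_right]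
        _ = - ∑ x : Fin n → ZMod 2, chi u x := by
            rw [hchit, ← Finset.sum_neg_distrib]; simp
    have h0 := eq_neg_iff_add_eq_zero.mp hneg
    have h2 : (2:ℂ) * ∑ x : Fin n → ZMod 2, chi u x = 0 := by linear_combination h0
    have h2' : (2:ℂ) ≠ 0 := by norm_num
    exact (mul_eq_zero.mp h2).resolve_left h2'

lemma inv_sum (c : (Fin n → ZMod 2) → ℂ) (a : Fin n → ZMod 2) :
    ∑ u : Fin n → ZMod 2, (∑ b : Fin n → ZMod 2, c b * chi u b) * chi u a
      = (2 : ℂ) ^ n * c a := by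
  classical
  have h1 : ∀ u : Fin n → ZMod 2, (∑ b : Fin n → ZMod 2, c b * chi u b) * chi u a
      = ∑ b : Fin n → ZMod 2, c b * chi u (b + a) := by
    intro u
    rw [Finset.sum_mul]
    exact Finset.sum_congr rfl fun b _ => by rw [chi_add_right, mul_assoc]
  simp_rw [h1]
  rw [Finset.sum_comm]
  have h2 : ∀ b : Fin n → ZMod 2,
      ∑ u : Fin n → ZMod 2, c b * chi u (b + a) = c b * (if b = a then (2:ℂ)^n else 0) := by
    intro b
    rw [← Finset.mul_sum]
    congr 1
    calc ∑ u : Fin n → ZMod 2, chi u (b + a) = ∑ u : Fin n → ZMod 2, chi (b + a) u := by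
          simp_rw [chi_comm]
      _ = if b + a = 0 then (2:ℂ)^n else 0 := sum_chi (b + a)
      _ = if b = a then (2:ℂ)^n else 0 := by
          by_cases hba : b = a
          · simp [hba, self_add_self]
          · rw [if_neg (fun hh => hba ((add_eq_zero_iff b a).mp hh)), if_neg hba]
  simp_rw [h2, mul_ite, mul_zero]
  rw [Finset.sum_ite_eq' Finset.univ a (fun b => c b * (2:ℂ)^n)]
  simp [mul_comm]

lemma coeff_zero (c : (Fin n → ZMod 2) → ℂ)
    (h : ∀ x : Fin n → ZMod 2, ∑ u : Fin n → ZMod 2, c u * chi u x = 0) :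
    ∀ u, c u = 0 := by
  intro v
  have h1 : ∑ x : Fin n → ZMod 2, (∑ u : Fin n → ZMod 2, c u * chi u x) * chi v x = 0 := by
    simp [h]
  have h2 : ∑ x : Fin n → ZMod 2, (∑ u : Fin n → ZMod 2, c u * chi u x) * chi v x
      = (2:ℂ)^n * c v := by
    have hstep : ∀ x, (∑ u : Fin n → ZMod 2, c u * chi u x) * chi v x
        = ∑ u : Fin n → ZMod 2, c u * chi x (u + v) := by
      intro x
      rw [Finset.sum_mul]
      refine Finset.sum_congr rfl fun u _ => ?_
      rw [chi_add_right, mul_assoc, chi_comm u x, chi_comm v x]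
    simp_rw [hstep]
    rw [Finset.sum_comm]
    have h3 : ∀ u : Fin n → ZMod 2,
        ∑ x : Fin n → ZMod 2, c u * chi x (u + v) = c u * (if u = v then (2:ℂ)^n else 0) := by
      intro u
      rw [← Finset.mul_sum]
      congr 1
      calc ∑ x : Fin n → ZMod 2, chi x (u + v) = ∑ x : Fin n → ZMod 2, chi (u + v) x := by
            simp_rw [chi_comm]
        _ = if u + v = 0 then (2:ℂ)^n else 0 := sum_chi (u + v)
        _ = if u = v then (2:ℂ)^n else 0 := by
            by_cases huv : u = v
            · simp [huv, self_add_self]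
            · rw [if_neg (fun hh => huv ((add_eq_zero_iff u v).mp hh)), if_neg huv]
    simp_rw [h3, mul_ite, mul_zero]
    rw [Finset.sum_ite_eq' Finset.univ v (fun u => c u * (2:ℂ)^n)]
    simp [mul_comm]
  rw [h1] at h2
  have h4 : ((2:ℂ)^n) ≠ 0 := pow_ne_zero _ two_ne_zero
  exact (mul_eq_zero.mp h2.symm).resolve_left h4

noncomputable def E (q : ℕ) (a : ZMod q) : ℂ := zetaQ q ^ a.val

lemma zeta_pow_q (q : ℕ) (hq : q ≠ 0) : zetaQ q ^ q = 1 := by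
  rw [zetaQ, ← Complex.exp_nat_mul]
  have hq' : (q : ℂ) ≠ 0 := Nat.cast_ne_zero.mpr hq
  rw [mul_div_assoc', mul_comm, mul_div_assoc, div_self hq', mul_one]
  exact Complex.exp_two_pi_mul_I

lemma zeta_pow_mod (q : ℕ) (hq : q ≠ 0) (m : ℕ) :
    zetaQ q ^ (m % q) = zetaQ q ^ m := by
  conv_rhs => rw [← Nat.mod_add_div m q]
  rw [pow_add, pow_mul, zeta_pow_q q hq, one_pow, mul_one]

lemma E_add (q : ℕ) [NeZero q] (a b : ZMod q) : E q (a + b) = E q a * E q b := by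
  rw [E, E, E, ZMod.val_add, zeta_pow_mod q (NeZero.ne q), pow_add]

lemma E_zero (q : ℕ) [NeZero q] : E q 0 = 1 := by
  rw [E, ZMod.val_zero, pow_zero]

lemma E_mul_E_neg (q : ℕ) [NeZero q] (a : ZMod q) : E q a * E q (-a) = 1 := by
  rw [← E_add, add_neg_cancel, E_zero]

lemma E_ne_zero (q : ℕ) [NeZero q] (a : ZMod q) : E q a ≠ 0 :=
  left_ne_zero_of_mul_eq_one (E_mul_E_neg q a)

lemma abs_zeta (q : ℕ) : ‖zetaQ q‖ = 1 := by
  have h : zetaQ q = Complex.exp (((2 * Real.pi / q : ℝ) : ℂ) * Complex.I) := by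
    rw [zetaQ]; push_cast; ring_nf
  rw [h, Complex.norm_exp_ofReal_mul_I]

lemma E_conj (q : ℕ) [NeZero q] (a : ZMod q) :
    (starRingEnd ℂ) (E q a) = E q (-a) := by
  have h1 : E q a * (starRingEnd ℂ) (E q a) = 1 := by
    rw [Complex.mul_conj, ← Complex.sq_norm, E, norm_pow, abs_zeta q]
    norm_num
  have h2 := E_mul_E_neg q a
  exact mul_left_cancel₀ (E_ne_zero q a) (h1.trans h2.symm)

lemma gWHT_eq (q : ℕ) (f : (Fin n → ZMod 2) → ZMod q) (u : Fin n → ZMod 2) :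
    gWHT q f u = ∑ x : Fin n → ZMod 2, E q (f x) * chi u x := by
  unfold gWHT
  exact Finset.sum_congr rfl fun x _ => by rw [chi_eq_pow]; rfl

noncomputable def CC (q : ℕ) {n : ℕ} (f : (Fin n → ZMod 2) → ZMod q)
    (a : Fin n → ZMod 2) : ℂ := ∑ y : Fin n → ZMod 2, E q (f y - f (y + a))

lemma conj_gWHT (q : ℕ) [NeZero q] (f : (Fin n → ZMod 2) → ZMod q) (u : Fin n → ZMod 2) :
    (starRingEnd ℂ) (gWHT q f u)
      = ∑ z : Fin n → ZMod 2, E q (-(f z)) * chi u z := by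
  rw [gWHT_eq, map_sum]
  exact Finset.sum_congr rfl fun z _ => by rw [map_mul, E_conj, chi_conj]

lemma inner_sum (q : ℕ) [NeZero q] (f : (Fin n → ZMod 2) → ZMod q)
    (u y : Fin n → ZMod 2) :
    ∑ a : Fin n → ZMod 2, E q (f y - f (y + a)) * chi u a
      = E q (f y) * chi u y * (starRingEnd ℂ) (gWHT q f u) := by
  have hL : ∑ z : Fin n → ZMod 2, E q (f y - f z) * (chi u y * chi u z)
      = ∑ a : Fin n → ZMod 2, E q (f y - f (y + a)) * chi u a := by
    refine Fintype.sum_equiv (Equiv.addLeft y) _ _ (fun z => ?_)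
    have h1 : y + (y + z) = z := by rw [← add_assoc, self_add_self, zero_add]
    show E q (f y - f z) * (chi u y * chi u z)
        = E q (f y - f (y + (y + z))) * chi u (y + z)
    rw [h1, chi_add_right]
  rw [← hL, conj_gWHT, mul_assoc, Finset.mul_sum, Finset.mul_sum]
  refine Finset.sum_congr rfl fun z _ => ?_
  rw [sub_eq_add_neg, E_add]
  ring

lemma hatC (q : ℕ) [NeZero q] (f : (Fin n → ZMod 2) → ZMod q) (u : Fin n → ZMod 2) :
    ∑ a : Fin n → ZMod 2, CC q f a * chi u a
      = gWHT q f u * (starRingEnd ℂ) (gWHT q f u) := by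
  unfold CC
  simp_rw [Finset.sum_mul]
  rw [Finset.sum_comm]
  have h : ∀ y : Fin n → ZMod 2,
      ∑ a : Fin n → ZMod 2, E q (f y - f (y + a)) * chi u a
        = E q (f y) * chi u y * (starRingEnd ℂ) (gWHT q f u) :=
    fun y => inner_sum q f u y
  simp_rw [h]
  rw [← Finset.sum_mul, gWHT_eq]

lemma C_conj (q : ℕ) [NeZero q] (f : (Fin n → ZMod 2) → ZMod q) (a : Fin n → ZMod 2) :
    (starRingEnd ℂ) (CC q f a) = CC q f a := by
  rw [CC, map_sum]
  have h1 : ∀ y : Fin n → ZMod 2,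
      (starRingEnd ℂ) (E q (f y - f (y + a))) = E q (f (y + a) - f y) := by
    intro y
    rw [E_conj, neg_sub]
  simp_rw [h1]
  refine Fintype.sum_equiv (Equiv.addRight a) _ _ (fun y => ?_)
  show E q (f (y + a) - f y) = E q (f (y + a) - f (y + a + a))
  rw [add_assoc, self_add_self, add_zero]

lemma stepA (q : ℕ) [NeZero q] (f : (Fin n → ZMod 2) → ZMod q) (x a : Fin n → ZMod 2) :
    ∑ b : Fin n → ZMod 2, E q (f x - f (x + a) - f (x + b) + f (x + a + b))
      = E q (f x - f (x + a)) * (starRingEnd ℂ) (CC q f a) := by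
  have h1 : ∀ b : Fin n → ZMod 2,
      f x - f (x + a) - f (x + b) + f (x + a + b)
        = (f x - f (x + a)) + (-(f (x + b) - f ((x + b) + a))) := by
    intro b
    have h2 : x + a + b = (x + b) + a := by rw [add_right_comm]
    rw [h2]; ring
  have h3 : ∀ b : Fin n → ZMod 2,
      E q (f x - f (x + a) - f (x + b) + f (x + a + b))
        = E q (f x - f (x + a)) * E q (-(f (x + b) - f ((x + b) + a))) := by
    intro b; rw [h1 b, E_add]
  simp_rw [h3]
  rw [← Finset.mul_sum]
  congr 1
  rw [CC, map_sum]
  have h4 : ∀ y : Fin n → ZMod 2,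
      (starRingEnd ℂ) (E q (f y - f (y + a))) = E q (-(f y - f (y + a))) :=
    fun y => E_conj q _
  simp_rw [h4]
  exact Fintype.sum_equiv (Equiv.addLeft x) _ _ (fun b => rfl)

lemma master (q : ℕ) [NeZero q] (f : (Fin n → ZMod 2) → ZMod q) (x : Fin n → ZMod 2) :
    (2 : ℂ) ^ n *
      (∑ a : Fin n → ZMod 2, ∑ b : Fin n → ZMod 2,
        E q (f x - f (x + a) - f (x + b) + f (x + a + b)))
      = ∑ u : Fin n → ZMod 2,
          (gWHT q f u * (starRingEnd ℂ) (gWHT q f u) * (starRingEnd ℂ) (gWHT q f u))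
            * (E q (f x) * chi u x) := by
  have hCinv : ∀ a : Fin n → ZMod 2, (2:ℂ)^n * CC q f a
      = ∑ u : Fin n → ZMod 2,
          (gWHT q f u * (starRingEnd ℂ) (gWHT q f u)) * chi u a := by
    intro a
    rw [← inv_sum (CC q f) a]
    exact (Finset.sum_congr rfl fun u _ => by rw [hatC]).symm
  calc (2 : ℂ) ^ n *
      (∑ a : Fin n → ZMod 2, ∑ b : Fin n → ZMod 2,
        E q (f x - f (x + a) - f (x + b) + f (x + a + b)))
      = (2:ℂ)^n * ∑ a : Fin n → ZMod 2, E q (f x - f (x + a)) * CC q f a := by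
        congr 1
        exact Finset.sum_congr rfl fun a _ => by rw [stepA, C_conj]
    _ = ∑ a : Fin n → ZMod 2, E q (f x - f (x + a)) * ((2:ℂ)^n * CC q f a) := by
        rw [Finset.mul_sum]
        exact Finset.sum_congr rfl fun a _ => by ring
    _ = ∑ a : Fin n → ZMod 2, ∑ u : Fin n → ZMod 2,
          (gWHT q f u * (starRingEnd ℂ) (gWHT q f u)) * (E q (f x - f (x + a)) * chi u a) := by
        refine Finset.sum_congr rfl fun a _ => ?_
        rw [hCinv a, Finset.mul_sum]
        exact Finset.sum_congr rfl fun u _ => by ring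
    _ = ∑ u : Fin n → ZMod 2,
          (gWHT q f u * (starRingEnd ℂ) (gWHT q f u))
            * ∑ a : Fin n → ZMod 2, E q (f x - f (x + a)) * chi u a := by
        rw [Finset.sum_comm]
        exact Finset.sum_congr rfl fun u _ => by rw [Finset.mul_sum]
    _ = ∑ u : Fin n → ZMod 2,
          (gWHT q f u * (starRingEnd ℂ) (gWHT q f u) * (starRingEnd ℂ) (gWHT q f u))
            * (E q (f x) * chi u x) := by
        refine Finset.sum_congr rfl fun u _ => ?_
        rw [inner_sum q f u x]
        ring

lemma L1conj (q : ℕ) [NeZero q] (f : (Fin n → ZMod 2) → ZMod q) (x : Fin n → ZMod 2) :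
    ∑ u : Fin n → ZMod 2, (starRingEnd ℂ) (gWHT q f u) * chi u x
      = (2:ℂ)^n * E q (-(f x)) := by
  have h1 : ∑ u : Fin n → ZMod 2, gWHT q f u * chi u x = (2:ℂ)^n * E q (f x) := by
    rw [← inv_sum (fun y => E q (f y)) x]
    exact Finset.sum_congr rfl fun u _ => by rw [gWHT_eq]
  have h2 := congrArg (starRingEnd ℂ) h1
  rw [map_sum, map_mul] at h2
  simp_rw [map_mul, chi_conj] at h2
  rw [h2]
  congr 1
  · rw [map_pow, Complex.conj_ofNat]
  · rw [E_conj]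

end S14

open S14

/-- Theorem 11, first part: `f` is `s`-plateaued iff for all `x`,
`Σ_{a,b} ζ^{D_b D_a f(x)} = 2^{n+s}`. -/
theorem stmt14 (n k s : ℕ) (hn : 1 ≤ n) (hk : 2 ≤ k) (hs : s ≤ n)
    (f : (Fin n → ZMod 2) → ZMod (2 ^ k)) :
    (∀ u, ‖gWHT (2 ^ k) f u‖ = 0 ∨
      ‖gWHT (2 ^ k) f u‖ = (2 : ℝ) ^ (((n + s : ℕ) : ℝ) / 2)) ↔
    (∀ x : Fin n → ZMod 2,
      ∑ a : Fin n → ZMod 2, ∑ b : Fin n → ZMod 2,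
        zetaQ (2 ^ k) ^ (f x - f (fun i => x i + a i) - f (fun i => x i + b i) +
          f (fun i => x i + a i + b i)).val
        = (2 : ℂ) ^ (n + s)) := by
  haveI : NeZero (2 ^ k) := ⟨pow_ne_zero _ two_ne_zero⟩
  have hsum_eq : ∀ x : Fin n → ZMod 2,
      (∑ a : Fin n → ZMod 2, ∑ b : Fin n → ZMod 2,
        zetaQ (2 ^ k) ^ (f x - f (fun i => x i + a i) - f (fun i => x i + b i) +
          f (fun i => x i + a i + b i)).val)
      = ∑ a : Fin n → ZMod 2, ∑ b : Fin n → ZMod 2,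
          E (2 ^ k) (f x - f (x + a) - f (x + b) + f (x + a + b)) := by
    intro x
    rfl
  have h2n : ((2:ℂ)^n) ≠ 0 := pow_ne_zero _ two_ne_zero
  have hcast : (Complex.ofReal ((2:ℝ)^(n+s))) = (2:ℂ)^(n+s) := by push_cast; ring
  have hhalf : ((2:ℝ) ^ (((n + s : ℕ) : ℝ) / 2)) ^ 2 = (2:ℝ) ^ (n + s) := by
    rw [← Real.rpow_natCast ((2:ℝ) ^ (((n + s : ℕ) : ℝ) / 2)) 2,
      ← Real.rpow_mul (by norm_num : (0:ℝ) ≤ 2)]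
    have harith : ((n + s : ℕ) : ℝ) / 2 * ((2:ℕ):ℝ) = ((n + s : ℕ) : ℝ) := by
      push_cast; ring
    rw [harith, Real.rpow_natCast]
  constructor
  · intro hpl x
    have hP : ∀ u : Fin n → ZMod 2,
        gWHT (2 ^ k) f u * (starRingEnd ℂ) (gWHT (2 ^ k) f u) * (starRingEnd ℂ) (gWHT (2 ^ k) f u)
          = (2:ℂ)^(n+s) * (starRingEnd ℂ) (gWHT (2 ^ k) f u) := by
      intro u
      rcases hpl u with h0 | h2
      · have hz : gWHT (2 ^ k) f u = 0 := by
          exact norm_eq_zero.mp h0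
        simp [hz]
      · have habs2 : gWHT (2 ^ k) f u * (starRingEnd ℂ) (gWHT (2 ^ k) f u) = (2:ℂ)^(n+s) := by
          rw [Complex.mul_conj]
          have hns : Complex.normSq (gWHT (2 ^ k) f u) = (2:ℝ)^(n+s) := by
            rw [← Complex.sq_norm, h2, hhalf]
          rw [hns, hcast]
        rw [habs2]
    have hm := master (2 ^ k) f x
    rw [hsum_eq x]
    have hR : ∑ u : Fin n → ZMod 2,
        (gWHT (2 ^ k) f u * (starRingEnd ℂ) (gWHT (2 ^ k) f u) * (starRingEnd ℂ) (gWHT (2 ^ k) f u))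
          * (E (2 ^ k) (f x) * chi u x)
        = (2:ℂ)^(n+s) * (2:ℂ)^n := by
      calc ∑ u : Fin n → ZMod 2,
          (gWHT (2 ^ k) f u * (starRingEnd ℂ) (gWHT (2 ^ k) f u) * (starRingEnd ℂ) (gWHT (2 ^ k) f u))
            * (E (2 ^ k) (f x) * chi u x)
          = ∑ u : Fin n → ZMod 2,
              ((2:ℂ)^(n+s) * E (2 ^ k) (f x)) * ((starRingEnd ℂ) (gWHT (2 ^ k) f u) * chi u x) := by
            exact Finset.sum_congr rfl fun u _ => by rw [hP u]; ring
        _ = ((2:ℂ)^(n+s) * E (2 ^ k) (f x)) *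
              ∑ u : Fin n → ZMod 2, (starRingEnd ℂ) (gWHT (2 ^ k) f u) * chi u x := by
            rw [Finset.mul_sum]
        _ = ((2:ℂ)^(n+s) * E (2 ^ k) (f x)) * ((2:ℂ)^n * E (2 ^ k) (-(f x))) := by
            rw [L1conj]
        _ = (2:ℂ)^(n+s) * (2:ℂ)^n * (E (2 ^ k) (f x) * E (2 ^ k) (-(f x))) := by ring
        _ = (2:ℂ)^(n+s) * (2:ℂ)^n := by rw [E_mul_E_neg]; ring
    rw [hR] at hm
    have : (2:ℂ)^n * ((2:ℂ)^(n+s))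
        = (2:ℂ)^n * (∑ a : Fin n → ZMod 2, ∑ b : Fin n → ZMod 2,
            E (2 ^ k) (f x - f (x + a) - f (x + b) + f (x + a + b))) := by
      rw [hm]; ring
    exact (mul_left_cancel₀ h2n this).symm
  · intro hS u
    have key : ∀ v : Fin n → ZMod 2,
        gWHT (2 ^ k) f v * (starRingEnd ℂ) (gWHT (2 ^ k) f v) * (starRingEnd ℂ) (gWHT (2 ^ k) f v)
          = (2:ℂ)^(n+s) * (starRingEnd ℂ) (gWHT (2 ^ k) f v) := by
      have hz := coeff_zero (fun v =>
        gWHT (2 ^ k) f v * (starRingEnd ℂ) (gWHT (2 ^ k) f v) * (starRingEnd ℂ) (gWHT (2 ^ k) f v)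
          - (2:ℂ)^(n+s) * (starRingEnd ℂ) (gWHT (2 ^ k) f v)) ?_
      · intro v
        have := hz v
        linear_combination this
      · intro x
        beta_reduce
        have hm := master (2 ^ k) f x
        rw [← hsum_eq x, hS x] at hm
        have hL2 : ∑ u : Fin n → ZMod 2,
            ((2:ℂ)^(n+s) * (starRingEnd ℂ) (gWHT (2 ^ k) f u)) * (E (2 ^ k) (f x) * chi u x)
            = (2:ℂ)^n * (2:ℂ)^(n+s) := by
          calc ∑ u : Fin n → ZMod 2,
              ((2:ℂ)^(n+s) * (starRingEnd ℂ) (gWHT (2 ^ k) f u)) * (E (2 ^ k) (f x) * chi u x)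
              = ((2:ℂ)^(n+s) * E (2 ^ k) (f x)) *
                  ∑ u : Fin n → ZMod 2, (starRingEnd ℂ) (gWHT (2 ^ k) f u) * chi u x := by
                rw [Finset.mul_sum]
                exact Finset.sum_congr rfl fun u _ => by ring
            _ = ((2:ℂ)^(n+s) * E (2 ^ k) (f x)) * ((2:ℂ)^n * E (2 ^ k) (-(f x))) := by rw [L1conj]
            _ = (2:ℂ)^n * (2:ℂ)^(n+s) * (E (2 ^ k) (f x) * E (2 ^ k) (-(f x))) := by ring
            _ = (2:ℂ)^n * (2:ℂ)^(n+s) := by rw [E_mul_E_neg]; ring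
        have hEx := E_ne_zero (2 ^ k) (f x)
        have hfact : E (2 ^ k) (f x) * (∑ v : Fin n → ZMod 2,
            (gWHT (2 ^ k) f v * (starRingEnd ℂ) (gWHT (2 ^ k) f v) * (starRingEnd ℂ) (gWHT (2 ^ k) f v)
              - (2:ℂ)^(n+s) * (starRingEnd ℂ) (gWHT (2 ^ k) f v)) * chi v x) = 0 := by
          rw [Finset.mul_sum]
          have : ∀ v : Fin n → ZMod 2,
              E (2 ^ k) (f x) * ((gWHT (2 ^ k) f v * (starRingEnd ℂ) (gWHT (2 ^ k) f v) * (starRingEnd ℂ) (gWHT (2 ^ k) f v)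
                - (2:ℂ)^(n+s) * (starRingEnd ℂ) (gWHT (2 ^ k) f v)) * chi v x)
              = (gWHT (2 ^ k) f v * (starRingEnd ℂ) (gWHT (2 ^ k) f v) * (starRingEnd ℂ) (gWHT (2 ^ k) f v))
                  * (E (2 ^ k) (f x) * chi v x)
                - ((2:ℂ)^(n+s) * (starRingEnd ℂ) (gWHT (2 ^ k) f v)) * (E (2 ^ k) (f x) * chi v x) := by
            intro v; ring
          simp_rw [this]
          rw [Finset.sum_sub_distrib, ← hm, hL2]
          ring
        rcases mul_eq_zero.mp hfact with h | h
        · exact absurd h hEx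
        · exact h
    by_cases hz : gWHT (2 ^ k) f u = 0
    · left; rw [hz]; exact norm_zero
    · right
      have hcne : (starRingEnd ℂ) (gWHT (2 ^ k) f u) ≠ 0 := by
        rw [starRingEnd_apply, star_ne_zero]; exact hz
      have hmc : gWHT (2 ^ k) f u * (starRingEnd ℂ) (gWHT (2 ^ k) f u) = (2:ℂ)^(n+s) :=
        mul_right_cancel₀ hcne (key u)
      have hnsq : Complex.normSq (gWHT (2 ^ k) f u) = (2:ℝ)^(n+s) := by
        have := hmc
        rw [Complex.mul_conj, ← hcast] at this
        exact_mod_cast this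
      have habs : ‖gWHT (2 ^ k) f u‖ = Real.sqrt ((2:ℝ)^(n+s)) := by
        rw [Complex.norm_def, hnsq]
      rw [habs, ← hhalf]
      exact Real.sqrt_sq (Real.rpow_nonneg (by norm_num) _)
end

section
/- Let n ≥ 1, k ≥ 2, q = 2^k, and let f : 𝔽₂ⁿ → ℤ_q be a generalized Boolean function. Then the following are equivalent: (1) f is generalized bent; (2) for every x ∈ 𝔽₂ⁿ, Σ_{a,b ∈ 𝔽₂ⁿ} ζ^{D_b D_a f(x)} = 2^n; (3) Σ_{d ∈ 𝔽₂ⁿ} |H_f(d)|⁴ = 2^{3n}. -/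
open scoped BigOperators

namespace S16

open Complex Finset

variable {n : ℕ}

lemma addSelf (x : Fin n → ZMod 2) : x + x = 0 := by
  funext i
  have h : ∀ a : ZMod 2, a + a = 0 := by decide
  exact h (x i)

lemma pow_val_add {q : ℕ} [NeZero q] {ω : ℂ} (hω : ω ^ q = 1) (a b : ZMod q) :
    ω ^ (a + b).val = ω ^ a.val * ω ^ b.val := by
  rw [ZMod.val_add, ← pow_eq_pow_mod _ hω, pow_add]

/-- `e q v = ζ_q^{v.val}`. -/
noncomputable def e (q : ℕ) (v : ZMod q) : ℂ := zetaQ q ^ v.val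

section Root

variable (q : ℕ) [NeZero q]

lemma zeta_pow : zetaQ q ^ q = 1 := by
  have hq : (q : ℂ) ≠ 0 := Nat.cast_ne_zero.mpr (NeZero.ne q)
  rw [zetaQ, ← Complex.exp_nat_mul,
    show (q : ℂ) * (2 * Real.pi * Complex.I / q) = 2 * Real.pi * Complex.I by
      field_simp]
  exact Complex.exp_two_pi_mul_I

lemma e_add (a b : ZMod q) : e q (a + b) = e q a * e q b :=
  pow_val_add (zeta_pow q) a b

lemma e_zero : e q 0 = 1 := by simp [e, ZMod.val_zero]

lemma abs_zeta : ‖zetaQ q‖ = 1 := by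
  rw [show zetaQ q = Complex.exp (((2 * Real.pi / q : ℝ) : ℂ) * Complex.I) by
    rw [zetaQ]; congr 1; push_cast; ring]
  exact Complex.norm_exp_ofReal_mul_I _

lemma abs_e (v : ZMod q) : ‖e q v‖ = 1 := by
  rw [e, norm_pow, abs_zeta, one_pow]

lemma conj_e (v : ZMod q) : (starRingEnd ℂ) (e q v) = e q (-v) := by
  have h1 : e q (-v) * e q v = 1 := by rw [← e_add, neg_add_cancel, e_zero]
  have h2 : (e q v)⁻¹ = (starRingEnd ℂ) (e q v) :=
    Complex.inv_eq_conj (by rw [abs_e])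
  rw [← h2]
  exact (eq_inv_of_mul_eq_one_left h1).symm

end Root

/-- The sign character `(-1)^{u·x}`. -/
noncomputable def s (u x : Fin n → ZMod 2) : ℂ := (-1) ^ (∑ i, (u i * x i).val)

lemma neg_one_sq' : ((-1 : ℂ)) ^ (2 : ℕ) = 1 := by norm_num

lemma s_prod (u x : Fin n → ZMod 2) :
    s u x = ∏ i, (-1 : ℂ) ^ (u i * x i).val :=
  (Finset.prod_pow_eq_pow_sum _ _ _).symm

lemma s_add_right (u x y : Fin n → ZMod 2) : s u (x + y) = s u x * s u y := by
  rw [s_prod, s_prod, s_prod, ← Finset.prod_mul_distrib]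
  refine Finset.prod_congr rfl fun i _ => ?_
  have h : u i * (x + y) i = u i * x i + u i * y i := by
    simp [Pi.add_apply, mul_add]
  rw [h, pow_val_add neg_one_sq']

lemma s_comm (u x : Fin n → ZMod 2) : s u x = s x u := by
  unfold s
  congr 1
  exact Finset.sum_congr rfl fun i _ => by rw [mul_comm]

lemma s_zero_right (u : Fin n → ZMod 2) : s u 0 = 1 := by
  simp [s]

lemma conj_s (u x : Fin n → ZMod 2) : (starRingEnd ℂ) (s u x) = s u x := by
  simp [s]

lemma card_G : (Fintype.card (Fin n → ZMod 2)) = 2 ^ n := by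
  simp [Fintype.card_fun]

lemma sum_s (u : Fin n → ZMod 2) :
    ∑ x : Fin n → ZMod 2, s u x = if u = 0 then ((2 : ℂ) ^ n) else 0 := by
  by_cases hu : u = 0
  · subst hu
    simp only [if_pos rfl]
    have h1 : ∀ x : Fin n → ZMod 2, s 0 x = 1 := fun x => by simp [s]
    rw [Finset.sum_congr rfl fun x _ => h1 x, Finset.sum_const, Finset.card_univ, card_G]
    simp
  · rw [if_neg hu]
    obtain ⟨i0, hi0⟩ : ∃ i, u i ≠ 0 := by
      by_contra h
      push_neg at h
      exact hu (funext fun i => h i)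
    have hu1 : u i0 = 1 := by
      have h : ∀ a : ZMod 2, a ≠ 0 → a = 1 := by decide
      exact h _ hi0
    set δ : Fin n → ZMod 2 := Pi.single i0 1 with hδ
    have hsδ : s u δ = -1 := by
      rw [s_prod]
      rw [Finset.prod_eq_single i0 (fun i _ hi => by
        simp [hδ, Pi.single_apply, hi]) (fun h => absurd (Finset.mem_univ i0) h)]
      simp [hδ, Pi.single_apply, hu1, ZMod.val_one]
    have key : ∑ x : Fin n → ZMod 2, s u x = -∑ x : Fin n → ZMod 2, s u x := by
      conv_lhs => rw [← Equiv.sum_comp (Equiv.addRight δ) (s u)]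
      rw [← Finset.sum_neg_distrib]
      refine Finset.sum_congr rfl fun x _ => ?_
      show s u (x + δ) = -s u x
      rw [s_add_right, hsδ]
      ring
    have h2 : (2 : ℂ) * ∑ x : Fin n → ZMod 2, s u x = 0 := by
      rw [two_mul]
      nth_rewrite 2 [key]
      ring
    exact (mul_eq_zero.mp h2).resolve_left two_ne_zero

section Main

variable (q : ℕ) [NeZero q] (f : (Fin n → ZMod 2) → ZMod q)

/-- The autocorrelation function. -/
noncomputable def CC (a : Fin n → ZMod 2) : ℂ :=
  ∑ x : Fin n → ZMod 2, e q (f x - f (x + a))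

lemma gWHT_eq (u : Fin n → ZMod 2) :
    gWHT q f u = ∑ x : Fin n → ZMod 2, e q (f x) * s u x := rfl

lemma conj_gWHT (u : Fin n → ZMod 2) :
    (starRingEnd ℂ) (gWHT q f u) = ∑ y : Fin n → ZMod 2, e q (-(f y)) * s u y := by
  rw [gWHT_eq, map_sum]
  exact Finset.sum_congr rfl fun y _ => by rw [map_mul, conj_e, conj_s]

lemma CC_zero : CC q f 0 = (2 : ℂ) ^ n := by
  have h : ∀ x : Fin n → ZMod 2, e q (f x - f (x + 0)) = 1 := fun x => by
    rw [add_zero, sub_self, e_zero]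
  rw [CC, Finset.sum_congr rfl fun x _ => h x, Finset.sum_const, Finset.card_univ, card_G]
  simp

lemma gWHT_mul_conj (u : Fin n → ZMod 2) :
    gWHT q f u * (starRingEnd ℂ) (gWHT q f u) = ∑ a : Fin n → ZMod 2, CC q f a * s u a := by
  rw [conj_gWHT, gWHT_eq, Finset.sum_mul_sum]
  have step1 : ∀ x : Fin n → ZMod 2,
      (∑ y : Fin n → ZMod 2, (e q (f x) * s u x) * (e q (-(f y)) * s u y))
      = ∑ a : Fin n → ZMod 2, e q (f x - f (x + a)) * s u a := by
    intro x
    rw [← Equiv.sum_comp (Equiv.addLeft x)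
      (fun y => (e q (f x) * s u x) * (e q (-(f y)) * s u y))]
    refine Finset.sum_congr rfl fun a _ => ?_
    show (e q (f x) * s u x) * (e q (-(f (x + a))) * s u (x + a)) = _
    have hs : s u x * s u (x + a) = s u a := by
      rw [← s_add_right]
      congr 1
      rw [← add_assoc, addSelf, zero_add]
    have he : e q (f x - f (x + a)) = e q (f x) * e q (-(f (x + a))) := by
      rw [sub_eq_add_neg, e_add]
    rw [he, ← hs]
    ring
  rw [Finset.sum_congr rfl fun x _ => step1 x, Finset.sum_comm]
  refine Finset.sum_congr rfl fun a _ => ?_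
  rw [CC, Finset.sum_mul]

lemma sum_s' (v : Fin n → ZMod 2) :
    ∑ u : Fin n → ZMod 2, s u v = if v = 0 then ((2 : ℂ) ^ n) else 0 := by
  rw [Finset.sum_congr rfl fun u _ => s_comm u v]
  exact sum_s v

lemma inv_formula (a : Fin n → ZMod 2) :
    ∑ u : Fin n → ZMod 2, (gWHT q f u * (starRingEnd ℂ) (gWHT q f u)) * s a u
      = (2 : ℂ) ^ n * CC q f a := by
  have step1 : ∀ u : Fin n → ZMod 2,
      (gWHT q f u * (starRingEnd ℂ) (gWHT q f u)) * s a u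
      = ∑ b : Fin n → ZMod 2, CC q f b * s u (b + a) := by
    intro u
    rw [gWHT_mul_conj, Finset.sum_mul]
    refine Finset.sum_congr rfl fun b _ => ?_
    rw [s_add_right, s_comm a u]
    ring
  rw [Finset.sum_congr rfl fun u _ => step1 u, Finset.sum_comm]
  have step2 : ∀ b : Fin n → ZMod 2,
      ∑ u : Fin n → ZMod 2, CC q f b * s u (b + a)
      = CC q f b * (if b + a = 0 then ((2 : ℂ) ^ n) else 0) := by
    intro b
    rw [← Finset.mul_sum, sum_s']
  rw [Finset.sum_congr rfl fun b _ => step2 b]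
  rw [Finset.sum_eq_single a (fun b _ hb => by
      rw [if_neg, mul_zero]
      intro hba
      apply hb
      have h := congrArg (· + a) hba
      simpa [add_assoc, addSelf] using h)
    (fun h => absurd (Finset.mem_univ a) h)]
  rw [if_pos (addSelf a)]
  ring

lemma deriv_formula (x : Fin n → ZMod 2) :
    ∑ a : Fin n → ZMod 2, ∑ b : Fin n → ZMod 2,
      e q (f x - f (x + a) - f (x + b) + f (x + a + b))
    = ∑ a : Fin n → ZMod 2, e q (f x - f (x + a)) * (starRingEnd ℂ) (CC q f a) := by
  refine Finset.sum_congr rfl fun a _ => ?_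
  have hconj : (starRingEnd ℂ) (CC q f a)
      = ∑ b : Fin n → ZMod 2, e q (-(f (x + b) - f (x + b + a))) := by
    rw [CC, map_sum, ← Equiv.sum_comp (Equiv.addLeft x)
      (fun y => (starRingEnd ℂ) (e q (f y - f (y + a))))]
    refine Finset.sum_congr rfl fun b _ => ?_
    show (starRingEnd ℂ) (e q (f (x + b) - f (x + b + a))) = _
    rw [conj_e]
  rw [hconj, Finset.mul_sum]
  refine Finset.sum_congr rfl fun b _ => ?_
  rw [← e_add]
  congr 1
  rw [show x + b + a = x + a + b by ring]
  abel

lemma fourth_formula :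
    ∑ d : Fin n → ZMod 2, ((Complex.normSq (gWHT q f d) : ℂ)) ^ 2
      = (2 : ℂ) ^ n * ∑ a : Fin n → ZMod 2, (Complex.normSq (CC q f a) : ℂ) := by
  have step1 : ∀ d : Fin n → ZMod 2,
      ((Complex.normSq (gWHT q f d) : ℂ)) ^ 2
      = ∑ a : Fin n → ZMod 2, ∑ b : Fin n → ZMod 2,
          (CC q f a * (starRingEnd ℂ) (CC q f b)) * s d (a + b) := by
    intro d
    have h1 : ((Complex.normSq (gWHT q f d) : ℝ) : ℂ)
        = gWHT q f d * (starRingEnd ℂ) (gWHT q f d) := (Complex.mul_conj _).symm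
    have h2 : ((Complex.normSq (gWHT q f d) : ℝ) : ℂ)
        = ∑ b : Fin n → ZMod 2, (starRingEnd ℂ) (CC q f b) * s d b := by
      rw [show ((Complex.normSq (gWHT q f d) : ℝ) : ℂ)
          = (starRingEnd ℂ) (((Complex.normSq (gWHT q f d) : ℝ) : ℂ)) from
        (Complex.conj_ofReal _).symm]
      conv_lhs => rw [h1]
      rw [gWHT_mul_conj, map_sum]
      exact Finset.sum_congr rfl fun b _ => by rw [map_mul, conj_s]
    rw [sq]
    nth_rewrite 1 [h1]
    rw [h2, gWHT_mul_conj, Finset.sum_mul_sum]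
    refine Finset.sum_congr rfl fun a _ => Finset.sum_congr rfl fun b _ => ?_
    rw [s_add_right]
    ring
  rw [Finset.sum_congr rfl fun d _ => step1 d, Finset.sum_comm]
  have step2 : ∀ a : Fin n → ZMod 2,
      ∑ d : Fin n → ZMod 2, ∑ b : Fin n → ZMod 2,
        (CC q f a * (starRingEnd ℂ) (CC q f b)) * s d (a + b)
      = (2 : ℂ) ^ n * (Complex.normSq (CC q f a) : ℂ) := by
    intro a
    rw [Finset.sum_comm]
    have inner : ∀ b : Fin n → ZMod 2,
        ∑ d : Fin n → ZMod 2, (CC q f a * (starRingEnd ℂ) (CC q f b)) * s d (a + b)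
        = (CC q f a * (starRingEnd ℂ) (CC q f b)) *
            (if a + b = 0 then ((2 : ℂ) ^ n) else 0) := by
      intro b
      rw [← Finset.mul_sum, sum_s']
    rw [Finset.sum_congr rfl fun b _ => inner b]
    rw [Finset.sum_eq_single a (fun b _ hb => by
        rw [if_neg, mul_zero]
        intro hab
        apply hb
        have h := congrArg (a + ·) hab
        simp only [← add_assoc, addSelf, zero_add, add_zero] at h
        exact h)
      (fun h => absurd (Finset.mem_univ a) h)]
    rw [if_pos (addSelf a), Complex.mul_conj]
    ring
  rw [Finset.sum_congr rfl fun a _ => step2 a, ← Finset.mul_sum]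

lemma normSq_CC_zero : Complex.normSq (CC q f 0) = (2 : ℝ) ^ n * (2 : ℝ) ^ n := by
  rw [CC_zero]
  rw [show ((2 : ℂ) ^ n) = (((2 : ℝ) ^ n : ℝ) : ℂ) by push_cast; ring,
    Complex.normSq_ofReal]

lemma P_of_sum (h : ∑ a : Fin n → ZMod 2, Complex.normSq (CC q f a)
      = (2 : ℝ) ^ n * (2 : ℝ) ^ n) :
    ∀ a : Fin n → ZMod 2, a ≠ 0 → CC q f a = 0 := by
  have hsplit := Finset.add_sum_erase Finset.univ
    (fun a => Complex.normSq (CC q f a)) (Finset.mem_univ (0 : Fin n → ZMod 2))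
  have h0 : ∑ a ∈ Finset.univ.erase (0 : Fin n → ZMod 2),
      Complex.normSq (CC q f a) = 0 := by
    have h1 := normSq_CC_zero q f (n := n)
    rw [h] at hsplit
    rw [h1] at hsplit
    linarith
  intro a ha
  have hm : a ∈ Finset.univ.erase (0 : Fin n → ZMod 2) := by
    simp [ha]
  have h2 := (Finset.sum_eq_zero_iff_of_nonneg
    (fun i _ => Complex.normSq_nonneg (CC q f i))).mp h0 a hm
  exact Complex.normSq_eq_zero.mp h2

lemma bent_iff_P :
    (∀ u, ‖gWHT q f u‖ = (2 : ℝ) ^ ((n : ℝ) / 2))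
      ↔ (∀ a : Fin n → ZMod 2, a ≠ 0 → CC q f a = 0) := by
  have hpow : ((2 : ℝ) ^ ((n : ℝ) / 2)) ^ (2 : ℕ) = (2 : ℝ) ^ n := by
    rw [← Real.rpow_natCast ((2 : ℝ) ^ ((n : ℝ) / 2)) 2,
      ← Real.rpow_mul (by norm_num : (0:ℝ) ≤ 2)]
    rw [show (n : ℝ) / 2 * ((2 : ℕ) : ℝ) = ((n : ℕ) : ℝ) by push_cast; ring]
    rw [Real.rpow_natCast]
  constructor
  · intro h a ha
    have habs2 : ∀ u, gWHT q f u * (starRingEnd ℂ) (gWHT q f u) = (2 : ℂ) ^ n := by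
      intro u
      rw [Complex.mul_conj]
      have hn : Complex.normSq (gWHT q f u) = (2 : ℝ) ^ n := by
        rw [← Complex.sq_norm, h u, hpow]
      rw [hn]
      push_cast
      ring
    have hinv := inv_formula q f a
    rw [Finset.sum_congr rfl fun u _ => by rw [habs2 u]] at hinv
    rw [← Finset.mul_sum, sum_s, if_neg ha, mul_zero] at hinv
    have h2n : ((2 : ℂ) ^ n) ≠ 0 := pow_ne_zero _ two_ne_zero
    exact (mul_eq_zero.mp hinv.symm).resolve_left h2n
  · intro hP u
    have key : gWHT q f u * (starRingEnd ℂ) (gWHT q f u) = (2 : ℂ) ^ n := by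
      rw [gWHT_mul_conj]
      rw [Finset.sum_eq_single (0 : Fin n → ZMod 2)
        (fun b _ hb => by rw [hP b hb, zero_mul])
        (fun h => absurd (Finset.mem_univ _) h)]
      rw [CC_zero, s_zero_right, mul_one]
    have hns : Complex.normSq (gWHT q f u) = (2 : ℝ) ^ n := by
      rw [Complex.mul_conj] at key
      have h2 : ((Complex.normSq (gWHT q f u) : ℝ) : ℂ) = (((2:ℝ) ^ n : ℝ) : ℂ) := by
        rw [key]; push_cast; ring
      exact_mod_cast h2
    rw [Complex.norm_def, hns]
    rw [show (2 : ℝ) ^ n = ((2 : ℝ) ^ ((n : ℝ) / 2)) ^ (2 : ℕ) from hpow.symm]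
    exact Real.sqrt_sq (Real.rpow_nonneg (by norm_num) _)

end Main

end S16

/-- Corollary 12: `f` is generalized bent iff
`Σ_{a,b} ζ^{D_b D_a f(x)} = 2^n` for all `x`, iff `Σ_d |H_f(d)|⁴ = 2^{3n}`. -/
theorem stmt16 (n k : ℕ) (hn : 1 ≤ n) (hk : 2 ≤ k)
    (f : (Fin n → ZMod 2) → ZMod (2 ^ k)) :
    ((∀ u, ‖gWHT (2 ^ k) f u‖ = (2 : ℝ) ^ ((n : ℝ) / 2)) ↔
      (∀ x : Fin n → ZMod 2,
        ∑ a : Fin n → ZMod 2, ∑ b : Fin n → ZMod 2,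
          zetaQ (2 ^ k) ^ (f x - f (fun i => x i + a i) - f (fun i => x i + b i) +
            f (fun i => x i + a i + b i)).val
          = (2 : ℂ) ^ n)) ∧
    ((∀ u, ‖gWHT (2 ^ k) f u‖ = (2 : ℝ) ^ ((n : ℝ) / 2)) ↔
      (∑ d : Fin n → ZMod 2, ‖gWHT (2 ^ k) f d‖ ^ 4 = (2 : ℝ) ^ (3 * n))) := by
  classical
  haveI : NeZero (2 ^ k) := ⟨pow_ne_zero _ two_ne_zero⟩
  have hstmt2 : ∀ x : Fin n → ZMod 2,
      (∑ a : Fin n → ZMod 2, ∑ b : Fin n → ZMod 2,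
        zetaQ (2 ^ k) ^ (f x - f (fun i => x i + a i) - f (fun i => x i + b i) +
          f (fun i => x i + a i + b i)).val)
      = ∑ a : Fin n → ZMod 2, ∑ b : Fin n → ZMod 2,
          S16.e (2 ^ k) (f x - f (x + a) - f (x + b) + f (x + a + b)) := fun x => rfl
  constructor
  · -- (1) ↔ (2)
    rw [S16.bent_iff_P (2 ^ k) f]
    constructor
    · intro hP x
      rw [hstmt2 x, S16.deriv_formula (2 ^ k) f x]
      rw [Finset.sum_eq_single (0 : Fin n → ZMod 2)
        (fun b _ hb => by rw [hP b hb, map_zero, mul_zero])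
        (fun h => absurd (Finset.mem_univ _) h)]
      rw [add_zero, sub_self, S16.e_zero, one_mul, S16.CC_zero]
      rw [show ((2 : ℂ) ^ n) = (((2 : ℝ) ^ n : ℝ) : ℂ) by push_cast; ring,
        Complex.conj_ofReal]
    · intro h2
      apply S16.P_of_sum (2 ^ k) f
      have hsum : ∑ x : Fin n → ZMod 2,
          (∑ a : Fin n → ZMod 2, ∑ b : Fin n → ZMod 2,
            S16.e (2 ^ k) (f x - f (x + a) - f (x + b) + f (x + a + b)))
          = (2 : ℂ) ^ n * (2 : ℂ) ^ n := by
        rw [Finset.sum_congr rfl fun x _ => by rw [← hstmt2 x, h2 x]]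
        rw [Finset.sum_const, Finset.card_univ, S16.card_G]
        push_cast
        ring
      have hsum2 : ∑ x : Fin n → ZMod 2,
          (∑ a : Fin n → ZMod 2, ∑ b : Fin n → ZMod 2,
            S16.e (2 ^ k) (f x - f (x + a) - f (x + b) + f (x + a + b)))
          = ∑ a : Fin n → ZMod 2, (Complex.normSq (S16.CC (2 ^ k) f a) : ℂ) := by
        rw [Finset.sum_congr rfl fun x _ => S16.deriv_formula (2 ^ k) f x, Finset.sum_comm]
        refine Finset.sum_congr rfl fun a _ => ?_
        rw [← Finset.sum_mul]
        rw [show (∑ x : Fin n → ZMod 2, S16.e (2 ^ k) (f x - f (x + a))) = S16.CC (2 ^ k) f a from rfl]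
        rw [Complex.mul_conj]
      have hC : ((∑ a : Fin n → ZMod 2, Complex.normSq (S16.CC (2 ^ k) f a) : ℝ) : ℂ)
          = (((2 : ℝ) ^ n * (2 : ℝ) ^ n : ℝ) : ℂ) := by
        push_cast
        rw [← hsum2, hsum]
      exact_mod_cast hC
  · -- (1) ↔ (3)
    constructor
    · intro h
      have habs : ∀ d : Fin n → ZMod 2,
          ‖gWHT (2 ^ k) f d‖ ^ 4 = (2 : ℝ) ^ (2 * n) := by
        intro d
        rw [h d, ← Real.rpow_natCast ((2 : ℝ) ^ ((n : ℝ) / 2)) 4,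
          ← Real.rpow_mul (by norm_num : (0:ℝ) ≤ 2),
          show (n : ℝ) / 2 * ((4 : ℕ) : ℝ) = ((2 * n : ℕ) : ℝ) by push_cast; ring,
          Real.rpow_natCast]
      rw [Finset.sum_congr rfl fun d _ => habs d, Finset.sum_const, Finset.card_univ,
        S16.card_G]
      rw [nsmul_eq_mul]
      push_cast
      rw [← pow_add]
      congr 1
      omega
    · intro h3
      rw [S16.bent_iff_P (2 ^ k) f]
      apply S16.P_of_sum (2 ^ k) f
      have habs4 : ∀ d : Fin n → ZMod 2,
          ‖gWHT (2 ^ k) f d‖ ^ 4 = Complex.normSq (gWHT (2 ^ k) f d) ^ 2 := by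
        intro d
        rw [show (4 : ℕ) = 2 * 2 from rfl, pow_mul, Complex.sq_norm]
      have hr : ∑ d : Fin n → ZMod 2, Complex.normSq (gWHT (2 ^ k) f d) ^ 2
          = (2 : ℝ) ^ (3 * n) := by
        rw [← h3]
        exact (Finset.sum_congr rfl fun d _ => habs4 d).symm
      have hcx : ∑ d : Fin n → ZMod 2, ((Complex.normSq (gWHT (2 ^ k) f d) : ℂ)) ^ 2
          = (((2 : ℝ) ^ (3 * n) : ℝ) : ℂ) := by
        rw [← hr]
        push_cast
        ring
      rw [S16.fourth_formula (2 ^ k) f] at hcx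
      have h2n : ((2 : ℂ) ^ n) ≠ 0 := pow_ne_zero _ two_ne_zero
      have hC : ∑ a : Fin n → ZMod 2, (Complex.normSq (S16.CC (2 ^ k) f a) : ℂ)
          = (((2 : ℝ) ^ n * (2 : ℝ) ^ n : ℝ) : ℂ) := by
        have h3n : (((2 : ℝ) ^ (3 * n) : ℝ) : ℂ)
            = (2 : ℂ) ^ n * (((2 : ℝ) ^ n * (2 : ℝ) ^ n : ℝ) : ℂ) := by
          push_cast
          rw [← pow_add, ← pow_add]
          congr 1
          omega
        rw [h3n] at hcx
        exact mul_left_cancel₀ h2n hcx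
      exact_mod_cast hC
end
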